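/- arXiv:0708.1155 — 3 statements merged into one kernel-verified Lean document; each statement's English description precedes it below -/
import Mathlib

section
/- (Keller–Osserman bound.) Let μ, s ∈ ℝ and p > 1, and let (d, c) be a regularized distance on Ω. If u is a sub-solution of (*) on Ω_ρ for some ρ > 0, then for every ρ' ∈ (0, ρ) there exists γ* > 0 (depending on u) such that u(x) ≤ γ*·δ(x)^{(s−2)/(p−1)} for all x ∈ Ω_{ρ'}. If moreover u is a sub-solution of (*) on all of Ω, then there exists γ* depending only on N, p, s, μ and c (independent of u) such that u(x) ≤ γ*·δ(x)^{(s−2)/(p−1)} for all x ∈ Ω. -/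
open Set Metric MeasureTheory Real

noncomputable section

/-- Distance to the boundary of `Ω`. -/
def bdist {N : ℕ} (Ω : Set (EuclideanSpace ℝ (Fin N))) (x : EuclideanSpace ℝ (Fin N)) : ℝ :=
  Metric.infDist x Ωᶜ

/-- The collar `Ω_ρ = {x ∈ Ω : δ(x) < ρ}`. -/
def collar {N : ℕ} (Ω : Set (EuclideanSpace ℝ (Fin N))) (ρ : ℝ) :
    Set (EuclideanSpace ℝ (Fin N)) :=
  {x ∈ Ω | bdist Ω x < ρ}

/-- The ring `Ω_{ε,ρ} = {x ∈ Ω : ε < δ(x) < ρ}`. -/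
def ring' {N : ℕ} (Ω : Set (EuclideanSpace ℝ (Fin N))) (ε ρ : ℝ) :
    Set (EuclideanSpace ℝ (Fin N)) :=
  {x ∈ Ω | ε < bdist Ω x ∧ bdist Ω x < ρ}

/-- The Laplacian. -/
def lap {N : ℕ} (f : EuclideanSpace ℝ (Fin N) → ℝ) (x : EuclideanSpace ℝ (Fin N)) : ℝ :=
  ∑ i : Fin N, fderiv ℝ (fun y => fderiv ℝ f y (EuclideanSpace.single i 1)) x
    (EuclideanSpace.single i 1)

/-- `ρ₀` is a good collar width: `δ` is `C²` on `Ω_{ρ₀}`, `|∇δ| = 1` there, `Δδ` bounded. -/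
def GoodCollar {N : ℕ} (Ω : Set (EuclideanSpace ℝ (Fin N))) (ρ₀ : ℝ) : Prop :=
  0 < ρ₀ ∧ ContDiffOn ℝ 2 (bdist Ω) (collar Ω ρ₀) ∧
    (∀ x ∈ collar Ω ρ₀, ‖gradient (bdist Ω) x‖ = 1) ∧
    ∃ M, ∀ x ∈ collar Ω ρ₀, |lap (bdist Ω) x| ≤ M

/-- A super-harmonic of `L_μ = -Δ - μ/δ²` on `G`. -/
def SuperHarm {N : ℕ} (Ω : Set (EuclideanSpace ℝ (Fin N))) (μ : ℝ)
    (G : Set (EuclideanSpace ℝ (Fin N))) (h : EuclideanSpace ℝ (Fin N) → ℝ) : Prop :=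
  ContDiffOn ℝ 2 h G ∧ ∀ x ∈ G, 0 ≤ -(lap h x) - μ / (bdist Ω x) ^ 2 * h x

/-- A sub-harmonic of `L_μ = -Δ - μ/δ²` on `G`. -/
def SubHarm {N : ℕ} (Ω : Set (EuclideanSpace ℝ (Fin N))) (μ : ℝ)
    (G : Set (EuclideanSpace ℝ (Fin N))) (h : EuclideanSpace ℝ (Fin N) → ℝ) : Prop :=
  ContDiffOn ℝ 2 h G ∧ ∀ x ∈ G, -(lap h x) - μ / (bdist Ω x) ^ 2 * h x ≤ 0

/-- A positive local super-harmonic of `L_μ`, defined on the collar `Ω_σ`. -/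
def PosSuperHarmOn {N : ℕ} (Ω : Set (EuclideanSpace ℝ (Fin N))) (μ σ : ℝ)
    (h : EuclideanSpace ℝ (Fin N) → ℝ) : Prop :=
  SuperHarm Ω μ (collar Ω σ) h ∧ ∀ x ∈ collar Ω σ, 0 < h x

/-- A sub-solution of `(*)`: `-Δu - (μ/δ²)u + u^p/δ^s = 0` on `G`. -/
def SubSol {N : ℕ} (Ω : Set (EuclideanSpace ℝ (Fin N))) (μ s p : ℝ)
    (G : Set (EuclideanSpace ℝ (Fin N))) (u : EuclideanSpace ℝ (Fin N) → ℝ) : Prop :=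
  ContDiffOn ℝ 2 u G ∧ (∀ x ∈ G, 0 ≤ u x) ∧
    ∀ x ∈ G, -(lap u x) - μ / (bdist Ω x) ^ 2 * u x + (u x) ^ p / (bdist Ω x) ^ s ≤ 0

/-- A super-solution of `(*)` on `G`. -/
def SuperSol {N : ℕ} (Ω : Set (EuclideanSpace ℝ (Fin N))) (μ s p : ℝ)
    (G : Set (EuclideanSpace ℝ (Fin N))) (u : EuclideanSpace ℝ (Fin N) → ℝ) : Prop :=
  ContDiffOn ℝ 2 u G ∧ (∀ x ∈ G, 0 < u x) ∧
    ∀ x ∈ G, 0 ≤ -(lap u x) - μ / (bdist Ω x) ^ 2 * u x + (u x) ^ p / (bdist Ω x) ^ s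

/-- A regularized distance `(d, c)` on `Ω`. -/
def RegDist {N : ℕ} (Ω : Set (EuclideanSpace ℝ (Fin N))) (d : EuclideanSpace ℝ (Fin N) → ℝ)
    (c : ℝ) : Prop :=
  1 ≤ c ∧ ContDiffOn ℝ 2 d Ω ∧ (∀ x ∈ Ω, 0 < d x) ∧
    (∀ x ∈ Ω, c⁻¹ * bdist Ω x ≤ d x ∧ d x ≤ c * bdist Ω x) ∧
    (∀ x ∈ Ω, ‖gradient d x‖ ≤ c) ∧ (∀ x ∈ Ω, |lap d x| ≤ c / d x)


open Filter Topology

set_option maxHeartbeats 1000000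

section Aux

variable {N : ℕ}

lemma oneD_second_nonpos {f f' : ℝ → ℝ} {a ε : ℝ} (hε : 0 < ε)
    (hd : ∀ t ∈ Ioo (-ε) ε, HasDerivAt f (f' t) t)
    (hd2 : HasDerivAt f' a 0)
    (hmax : IsLocalMax f 0) : a ≤ 0 := by
  by_contra hpos
  push_neg at hpos
  have h0 : (0:ℝ) ∈ Ioo (-ε) ε := by constructor <;> simp [hε]
  have hf'0 : f' 0 = 0 := hmax.hasDerivAt_eq_zero (hd 0 h0)
  have hslope : Tendsto (slope f' 0) (𝓝[≠] 0) (𝓝 a) :=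
    hasDerivAt_iff_tendsto_slope.mp hd2
  have hev : ∀ᶠ t in 𝓝[≠] (0:ℝ), 0 < slope f' 0 t :=
    hslope.eventually (eventually_gt_nhds hpos)
  have hev' : ∀ᶠ t in 𝓝[>] (0:ℝ), 0 < f' t := by
    have hle : 𝓝[>] (0:ℝ) ≤ 𝓝[≠] 0 := nhdsWithin_mono _ (fun x hx => ne_of_gt hx)
    filter_upwards [(hev.filter_mono hle).and self_mem_nhdsWithin] with t ht
    rcases ht with ⟨ht1, ht2⟩
    have ht2' : (0:ℝ) < t := ht2
    rw [slope_def_field] at ht1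
    rw [hf'0, sub_zero, sub_zero] at ht1
    have := mul_pos ht1 ht2'
    rwa [div_mul_cancel₀ _ (ne_of_gt ht2')] at this
  obtain ⟨δ, hδmem, hδ⟩ := mem_nhdsGT_iff_exists_Ioo_subset.mp hev'
  have hδpos : 0 < δ := hδmem
  set b := min δ ε with hb
  have hbpos : 0 < b := lt_min hδpos hε
  -- f is strictly monotone on [0, b/2]
  have hmono : StrictMonoOn f (Icc 0 (b/2)) := by
    apply strictMonoOn_of_deriv_pos (convex_Icc _ _)
    · intro x hx
      have hx' : x ∈ Ioo (-ε) ε := by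
        constructor
        · linarith [hx.1]
        · have : x ≤ b/2 := hx.2
          have : b ≤ ε := min_le_right _ _
          linarith [hx.1, hx.2]
      exact ((hd x hx').continuousAt).continuousWithinAt
    · intro x hx
      rw [interior_Icc] at hx
      have hx' : x ∈ Ioo (-ε) ε := by
        constructor
        · linarith [hx.1]
        · have : b ≤ ε := min_le_right _ _
          linarith [hx.2]
      rw [(hd x hx').deriv]
      apply hδ
      constructor
      · exact hx.1
      · have : b ≤ δ := min_le_left _ _
        linarith [hx.2]
  obtain ⟨ε₂, hε₂pos, hball⟩ := Metric.eventually_nhds_iff.mp hmax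
  set τ := min (b/2) (ε₂/2) with hτ
  have hτpos : 0 < τ := lt_min (by linarith) (by linarith)
  have h1 : f 0 < f τ := by
    apply hmono (by constructor <;> [linarith; linarith [min_le_left (b/2) (ε₂/2)]]) _ hτpos
    exact ⟨le_of_lt hτpos, min_le_left _ _⟩
  have h2 : f τ ≤ f 0 := by
    apply hball
    rw [Real.dist_eq, sub_zero, abs_of_pos hτpos]
    calc τ ≤ ε₂/2 := min_le_right _ _
    _ < ε₂ := by linarith
  linarith


lemma hasDerivAt_line {f : EuclideanSpace ℝ (Fin N) → ℝ} {z e : EuclideanSpace ℝ (Fin N)}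
    {t : ℝ} (hdiff : DifferentiableAt ℝ f (z + t • e)) :
    HasDerivAt (fun t : ℝ => f (z + t • e)) (fderiv ℝ f (z + t • e) e) t := by
  have hL : HasDerivAt (fun t : ℝ => z + t • e) e t := by
    simpa using ((hasDerivAt_id t).smul_const e).const_add z
  exact (hdiff.hasFDerivAt.comp_hasDerivAt t hL :)

lemma second_dir_nonpos {U : Set (EuclideanSpace ℝ (Fin N))} (hU : IsOpen U)
    {f : EuclideanSpace ℝ (Fin N) → ℝ} (hf : ContDiffOn ℝ 2 f U)
    {z : EuclideanSpace ℝ (Fin N)} (hz : z ∈ U) (hmax : IsLocalMax f z)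
    (e : EuclideanSpace ℝ (Fin N)) :
    fderiv ℝ (fun y => fderiv ℝ f y e) z e ≤ 0 := by
  obtain ⟨r, hr, hball⟩ := Metric.isOpen_iff.mp hU z hz
  set ε := r / (‖e‖ + 1) with hε
  have hepos : (0:ℝ) < ‖e‖ + 1 := by positivity
  have hεpos : 0 < ε := by positivity
  have hline : ∀ t : ℝ, |t| < ε → z + t • e ∈ U := by
    intro t ht
    apply hball
    rw [Metric.mem_ball, dist_eq_norm]
    have : ‖z + t • e - z‖ = |t| * ‖e‖ := by
      rw [add_sub_cancel_left, norm_smul, Real.norm_eq_abs]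
    rw [this]
    calc |t| * ‖e‖ ≤ |t| * (‖e‖ + 1) := by
          apply mul_le_mul_of_nonneg_left (by linarith) (abs_nonneg t)
    _ < ε * (‖e‖ + 1) := by exact mul_lt_mul_of_pos_right ht hepos
    _ = r := by rw [hε]; field_simp
  have hdiffat : ∀ y ∈ U, DifferentiableAt ℝ f y := fun y hy =>
    ((hf.contDiffAt (hU.mem_nhds hy)).differentiableAt (by norm_num))
  -- the first derivative along the line
  have hd : ∀ t ∈ Ioo (-ε) ε,
      HasDerivAt (fun t : ℝ => f (z + t • e)) (fderiv ℝ f (z + t • e) e) t := by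
    intro t ht
    apply hasDerivAt_line
    apply hdiffat
    apply hline
    rw [abs_lt]; exact ⟨ht.1, ht.2⟩
  -- differentiability of y ↦ fderiv f y e at z
  have hfd : DifferentiableAt ℝ (fderiv ℝ f) z := by
    have h2 : ContDiffAt ℝ 2 f z := hf.contDiffAt (hU.mem_nhds hz)
    have h1 : ContDiffAt ℝ 1 (fderiv ℝ f) z := h2.fderiv_right (by norm_num)
    exact h1.differentiableAt (by norm_num)
  have hFdiff : DifferentiableAt ℝ (fun y => fderiv ℝ f y e) z := by
    have : (fun y => fderiv ℝ f y e) =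
        (fun L : EuclideanSpace ℝ (Fin N) →L[ℝ] ℝ => L e) ∘ (fderiv ℝ f) := rfl
    rw [this]
    exact ((ContinuousLinearMap.apply ℝ ℝ e).differentiableAt).comp z hfd
  have hd2 : HasDerivAt (fun t : ℝ => fderiv ℝ f (z + t • e) e)
      (fderiv ℝ (fun y => fderiv ℝ f y e) z e) 0 := by
    have := hasDerivAt_line (f := fun y => fderiv ℝ f y e) (z := z) (e := e) (t := 0)
      (by simpa using hFdiff)
    simpa using this
  have hmaxφ : IsLocalMax (fun t : ℝ => f (z + t • e)) 0 := by
    have hLc : Tendsto (fun t : ℝ => z + t • e) (𝓝 0) (𝓝 z) := by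
      have : Continuous (fun t : ℝ => z + t • e) := by continuity
      have h0 := this.continuousAt (x := (0:ℝ))
      unfold ContinuousAt at h0
      simpa using h0
    have := hLc.eventually hmax
    simpa [IsLocalMax, IsMaxFilter] using this
  exact oneD_second_nonpos hεpos hd hd2 hmaxφ

lemma lap_nonpos_of_localmax {U : Set (EuclideanSpace ℝ (Fin N))} (hU : IsOpen U)
    {f : EuclideanSpace ℝ (Fin N) → ℝ} (hf : ContDiffOn ℝ 2 f U)
    {z : EuclideanSpace ℝ (Fin N)} (hz : z ∈ U) (hmax : IsLocalMax f z) :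
    lap f z ≤ 0 := by
  apply Finset.sum_nonpos
  intro i _
  exact second_dir_nonpos hU hf hz hmax _
variable {x₀ : EuclideanSpace ℝ (Fin N)} {R c : ℝ} {β : ℕ}

local notation "E" => EuclideanSpace ℝ (Fin N)

lemma wpos {y : E} (hy : ‖y - x₀‖ < R) : 0 < R^2 - ‖y - x₀‖^2 := by
  have h0 : (0:ℝ) ≤ ‖y - x₀‖ := norm_nonneg _
  nlinarith

/-- derivative of the scalar profile `a ↦ (R² - a)^(-m)` -/
lemma profile_hasDerivAt (m : ℤ) {a : ℝ} (ha : R^2 - a ≠ 0) :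
    HasDerivAt (fun b : ℝ => (R^2 - b) ^ m) ((-m) * (R^2 - a)^(m-1)) a := by
  have h1 : HasDerivAt (fun b : ℝ => R^2 - b) (-1) a := by
    simpa using (hasDerivAt_id a).const_sub (R^2)
  have h2 : HasDerivAt (fun b : ℝ => b ^ m) ((m:ℝ) * (R^2 - a) ^ (m-1)) (R^2 - a) :=
    hasDerivAt_zpow m _ (Or.inl ha)
  have := (h2.comp a h1 : HasDerivAt (fun b : ℝ => (R^2 - b) ^ m) _ a)
  exact this.congr_deriv (by ring)

lemma q_hasFDerivAt (y : E) :
    HasFDerivAt (fun y : E => ‖y - x₀‖^2) (2 • (innerSL ℝ (y - x₀))) y := by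
  have hsub : HasFDerivAt (fun y : E => y - x₀) (ContinuousLinearMap.id ℝ _) y :=
    (hasFDerivAt_id y).sub_const x₀
  have := hsub.norm_sq
  simpa using this

/-- `HasFDerivAt` for `y ↦ K * (R² - ‖y-x₀‖²)^m` -/
lemma VK_hasFDerivAt (K : ℝ) (m : ℤ) {y : E} (hy : ‖y - x₀‖ < R) :
    HasFDerivAt (fun y : E => K * (R^2 - ‖y - x₀‖^2) ^ m)
      ((K * (-m) * (R^2 - ‖y - x₀‖^2)^(m-1) * 2) • (innerSL ℝ (y - x₀))) y := by
  have hw : R^2 - ‖y - x₀‖^2 ≠ 0 := ne_of_gt (wpos hy)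
  have hq := q_hasFDerivAt (x₀ := x₀) y
  have hg := profile_hasDerivAt (R := R) m hw
  have hcomp := (hg.comp_hasFDerivAt y hq).const_mul K
  refine hcomp.congr_fderiv ?_
  ext h
  simp [ContinuousLinearMap.smul_apply, smul_smul]
  ring

lemma Bc_apply (i : Fin N) (y : E) :
    (innerSL ℝ (EuclideanSpace.single i (1:ℝ))) y = y i := by
  simp [EuclideanSpace.inner_single_left]

/-- the first partial of `V` as an explicit function -/
lemma fderiv_V_eq (i : Fin N) {y : E} (hy : ‖y - x₀‖ < R) :
    fderiv ℝ (fun y : E => c * (R^2 - ‖y - x₀‖^2) ^ (-(β:ℤ))) y (EuclideanSpace.single i 1)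
      = ((c * (β:ℝ) * 2) * (R^2 - ‖y - x₀‖^2)^(-(β:ℤ)-1)) *
        ((innerSL ℝ (EuclideanSpace.single i (1:ℝ))) y
          - (innerSL ℝ (EuclideanSpace.single i (1:ℝ))) x₀) := by
  have h := VK_hasFDerivAt (x₀ := x₀) c (-(β:ℤ)) hy
  rw [h.fderiv]
  have hin : (innerSL ℝ (y - x₀)) (EuclideanSpace.single i (1:ℝ))
      = (innerSL ℝ (EuclideanSpace.single i (1:ℝ))) y
        - (innerSL ℝ (EuclideanSpace.single i (1:ℝ))) x₀ := by
    simp [real_inner_comm]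
  rw [ContinuousLinearMap.smul_apply, hin]
  push_cast
  rw [smul_eq_mul]
  ring

/-- the function giving the first partial of `V` -/
lemma lap_V {y : E} (hy : ‖y - x₀‖ < R) :
    lap (fun y : E => c * (R^2 - ‖y - x₀‖^2) ^ (-(β:ℤ))) y
      = 2*c*(β:ℝ)*(N:ℝ) * (R^2 - ‖y - x₀‖^2)^(-(β:ℤ)-1)
        + 4*c*(β:ℝ)*((β:ℝ)+1) * (R^2 - ‖y - x₀‖^2)^(-(β:ℤ)-2) * ‖y - x₀‖^2 := by
  have hball : IsOpen {y' : E | ‖y' - x₀‖ < R} := by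
    have : {y' : E | ‖y' - x₀‖ < R} = Metric.ball x₀ R := by
      ext y'; simp [Metric.mem_ball, dist_eq_norm]
    rw [this]; exact Metric.isOpen_ball
  have hsecond : ∀ i : Fin N,
      fderiv ℝ (fun y' : E => fderiv ℝ (fun y : E => c * (R^2 - ‖y - x₀‖^2) ^ (-(β:ℤ))) y'
        (EuclideanSpace.single i 1)) y (EuclideanSpace.single i 1)
      = (c * (β:ℝ) * 2) * (R^2 - ‖y - x₀‖^2)^(-(β:ℤ)-1)
        + 4*c*(β:ℝ)*((β:ℝ)+1) * (R^2 - ‖y - x₀‖^2)^(-(β:ℤ)-2) * (y i - x₀ i)^2 := by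
    intro i
    set Bc := innerSL ℝ (EuclideanSpace.single i (1:ℝ)) with hBc
    have hev : (fun y' : E => fderiv ℝ (fun y : E => c * (R^2 - ‖y - x₀‖^2) ^ (-(β:ℤ))) y'
        (EuclideanSpace.single i 1))
        =ᶠ[nhds y] (fun y' : E => ((c * (β:ℝ) * 2) * (R^2 - ‖y' - x₀‖^2)^(-(β:ℤ)-1)) *
          (Bc y' - Bc x₀)) := by
      filter_upwards [hball.mem_nhds hy] with y' hy'
      exact fderiv_V_eq i hy'
    rw [hev.fderiv_eq]
    -- product rule
    have hA := VK_hasFDerivAt (x₀ := x₀) (c * (β:ℝ) * 2) (-(β:ℤ)-1) hy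
    have hB : HasFDerivAt (fun y' : E => Bc y' - Bc x₀) Bc y := Bc.hasFDerivAt.sub_const _
    have hprod := hA.fun_mul hB
    rw [hprod.fderiv]
    have hBce : Bc (EuclideanSpace.single i 1) = 1 := by
      rw [hBc, Bc_apply]
      simp [EuclideanSpace.single_apply]
    have hin : (innerSL ℝ (y - x₀)) (EuclideanSpace.single i (1:ℝ)) = y i - x₀ i := by
      simp only [innerSL_apply_apply]
      rw [real_inner_comm, EuclideanSpace.inner_single_left]
      simp [PiLp.sub_apply]
    have hBy : Bc y - Bc x₀ = y i - x₀ i := by rw [hBc, Bc_apply, Bc_apply]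
    rw [ContinuousLinearMap.add_apply, ContinuousLinearMap.smul_apply,
      ContinuousLinearMap.smul_apply, ContinuousLinearMap.smul_apply, hBce, hin, hBy]
    have hexp : (-(β:ℤ)-1-1) = (-(β:ℤ)-2) := by ring
    rw [hexp]
    simp only [smul_eq_mul]
    push_cast
    ring
  unfold lap
  rw [Finset.sum_congr rfl (fun i _ => hsecond i)]
  rw [Finset.sum_add_distrib, Finset.sum_const, ← Finset.mul_sum]
  have hnorm : ∑ i : Fin N, (y i - x₀ i)^2 = ‖y - x₀‖^2 := by
    rw [← real_inner_self_eq_norm_sq]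
    rw [PiLp.inner_apply]
    apply Finset.sum_congr rfl
    intro i _
    have : (y - x₀) i = y i - x₀ i := rfl
    simp [this]
  rw [hnorm]
  simp [Finset.card_univ]
  ring

lemma V_contDiffOn (hR : 0 < R) :
    ContDiffOn ℝ 2 (fun y : E => c * (R^2 - ‖y - x₀‖^2) ^ (-(β:ℤ)))
      {y' : E | ‖y' - x₀‖ < R} := by
  have heq : ∀ y : E, (R^2 - ‖y - x₀‖^2) ^ (-(β:ℤ)) = ((R^2 - ‖y - x₀‖^2) ^ β)⁻¹ := by
    intro y; rw [zpow_neg, zpow_natCast]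
  have hw : ContDiffOn ℝ 2 (fun y : E => R^2 - ‖y - x₀‖^2) {y' : E | ‖y' - x₀‖ < R} := by
    apply ContDiffOn.sub contDiffOn_const
    exact ((contDiff_norm_sq (𝕜 := ℝ)).comp (contDiff_id.sub contDiff_const)).contDiffOn
  have : ContDiffOn ℝ 2 (fun y : E => c * ((R^2 - ‖y - x₀‖^2) ^ β)⁻¹)
      {y' : E | ‖y' - x₀‖ < R} := by
    apply ContDiffOn.mul contDiffOn_const
    apply ContDiffOn.inv (hw.pow β)
    intro x hx
    exact pow_ne_zero _ (ne_of_gt (wpos hx))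
  convert this using 1
  funext y
  rw [heq]

lemma fderiv_apply_diffAt {U : Set E} (hU : IsOpen U) {f : E → ℝ}
    (hf : ContDiffOn ℝ 2 f U) {z : E} (hz : z ∈ U) (e : E) :
    DifferentiableAt ℝ (fun y => fderiv ℝ f y e) z := by
  have h2 : ContDiffAt ℝ 2 f z := hf.contDiffAt (hU.mem_nhds hz)
  have h1 : ContDiffAt ℝ 1 (fderiv ℝ f) z := h2.fderiv_right (by norm_num)
  have hfd : DifferentiableAt ℝ (fderiv ℝ f) z := h1.differentiableAt (by norm_num)
  exact ((ContinuousLinearMap.apply ℝ ℝ e).differentiableAt).comp z hfd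

lemma lap_sub {U : Set E} (hU : IsOpen U) {u v : E → ℝ}
    (hu : ContDiffOn ℝ 2 u U) (hv : ContDiffOn ℝ 2 v U) {z : E} (hz : z ∈ U) :
    lap (fun y => u y - v y) z = lap u z - lap v z := by
  have hdu : ∀ y ∈ U, DifferentiableAt ℝ u y := fun y hy =>
    (hu.contDiffAt (hU.mem_nhds hy)).differentiableAt (by norm_num)
  have hdv : ∀ y ∈ U, DifferentiableAt ℝ v y := fun y hy =>
    (hv.contDiffAt (hU.mem_nhds hy)).differentiableAt (by norm_num)
  unfold lap
  rw [← Finset.sum_sub_distrib]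
  apply Finset.sum_congr rfl
  intro i _
  have hev : (fun y => fderiv ℝ (fun y' => u y' - v y') y (EuclideanSpace.single i 1))
      =ᶠ[nhds z] (fun y => fderiv ℝ u y (EuclideanSpace.single i 1)
        - fderiv ℝ v y (EuclideanSpace.single i 1)) := by
    filter_upwards [hU.mem_nhds hz] with y hy
    rw [fderiv_fun_sub (hdu y hy) (hdv y hy), ContinuousLinearMap.sub_apply]
  rw [hev.fderiv_eq, fderiv_fun_sub (fderiv_apply_diffAt hU hu hz _) (fderiv_apply_diffAt hU hv hz _),
    ContinuousLinearMap.sub_apply]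


lemma ko_ball (Ω : Set E) (μ s p t : ℝ) (hp : 1 < p) (ht0 : 0 < t) (ht : t ≤ 1/2) :
    ∃ Λ : ℝ, 0 < Λ ∧ ∀ (u : E → ℝ) (x₀ : E), 0 < bdist Ω x₀ →
      ContDiffOn ℝ 2 u (closedBall x₀ (t * bdist Ω x₀)) →
      (∀ x ∈ closedBall x₀ (t * bdist Ω x₀), 0 ≤ u x) →
      (∀ x ∈ ball x₀ (t * bdist Ω x₀),
        -(lap u x) - μ / (bdist Ω x)^2 * u x + (u x)^p / (bdist Ω x)^s ≤ 0) →
      u x₀ ≤ Λ * (bdist Ω x₀) ^ ((s-2)/(p-1)) := by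
  have hp1 : (0:ℝ) < p - 1 := by linarith
  -- constants
  set β : ℕ := ⌈2/(p-1)⌉₊ with hβdef
  have hβ1 : 1 ≤ β := by
    rw [hβdef, Nat.one_le_ceil_iff]
    positivity
  have hβ1' : (1:ℝ) ≤ (β:ℝ) := by exact_mod_cast hβ1
  have hβ2 : 2 ≤ (β:ℝ) * (p-1) := by
    have h := Nat.le_ceil (2/(p-1))
    rw [← hβdef] at h
    calc (2:ℝ) = 2/(p-1) * (p-1) := by field_simp
    _ ≤ (β:ℝ) * (p-1) := by apply mul_le_mul_of_nonneg_right h hp1.le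
  set C₀ : ℝ := 2*(β:ℝ)*(N:ℝ) + 4*(β:ℝ)*((β:ℝ)+1) with hC₀def
  have hC₀ : 0 ≤ C₀ := by positivity
  set c₁ : ℝ := (max ((1/2:ℝ)^s) ((3/2:ℝ)^s))⁻¹ with hc₁def
  have hc₁ : 0 < c₁ := by
    rw [hc₁def]
    apply inv_pos.mpr
    apply lt_max_of_lt_left
    exact Real.rpow_pos_of_pos (by norm_num) s
  set c₂ : ℝ := 4*|μ| with hc₂def
  have hc₂ : 0 ≤ c₂ := by positivity
  set X : ℝ := max (max ((C₀/t^2 + c₂)/c₁) ((c₂+1)/c₁)) 1 with hXdef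
  have hX1 : (1:ℝ) ≤ X := le_max_right _ _
  have hX : 0 < X := lt_of_lt_of_le one_pos hX1
  have hXa : (C₀/t^2 + c₂)/c₁ ≤ X := le_trans (le_max_left _ _) (le_max_left _ _)
  have hXb : (c₂+1)/c₁ ≤ X := le_trans (le_max_right _ _) (le_max_left _ _)
  have hXa' : C₀/t^2 + c₂ ≤ c₁ * X := by
    rw [div_le_iff₀ hc₁] at hXa; linarith
  have hXb' : c₂ + 1 ≤ c₁ * X := by
    rw [div_le_iff₀ hc₁] at hXb; linarith
  set Λ : ℝ := X ^ (1/(p-1)) with hΛdef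
  have hΛ : 0 < Λ := Real.rpow_pos_of_pos hX _
  have hΛp : Λ ^ (p-1) = X := by
    rw [hΛdef, ← Real.rpow_mul hX.le, one_div, inv_mul_cancel₀ hp1.ne', Real.rpow_one]
  refine ⟨Λ, hΛ, ?_⟩
  intro u x₀ hr hu hu0 hpde
  set r : ℝ := bdist Ω x₀ with hrdef
  set R : ℝ := t * r with hRdef
  have hR : 0 < R := by positivity
  set θ : ℝ := (s-2)/(p-1) with hθdef
  -- distance bounds on the closed ball
  have hδ : ∀ y ∈ closedBall x₀ R, r/2 ≤ bdist Ω y ∧ bdist Ω y ≤ 3/2*r := by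
    intro y hy
    have hlip : |bdist Ω y - bdist Ω x₀| ≤ dist y x₀ := by
      have := (lipschitz_infDist_pt (Ωᶜ : Set E)).dist_le_mul y x₀
      rw [Real.dist_eq] at this
      simpa [bdist] using this
    have hdist : dist y x₀ ≤ R := mem_closedBall.mp hy
    have htr : R ≤ r/2 := by
      rw [hRdef]
      nlinarith
    rw [abs_le] at hlip
    constructor <;> [linarith [hlip.1]; linarith [hlip.2]]
  have hδpos : ∀ y ∈ closedBall x₀ R, 0 < bdist Ω y := fun y hy =>
    lt_of_lt_of_le (by positivity) (hδ y hy).1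
  obtain ⟨xK, hxK, hKmax⟩ := (isCompact_closedBall x₀ R).exists_isMaxOn
    ⟨x₀, mem_closedBall_self hR.le⟩ hu.continuousOn
  set K : ℝ := u xK with hKdef
  have hK0 : 0 ≤ K := hu0 xK hxK
  set K' : ℝ := K + 1 with hK'def
  have hK' : 0 < K' := by linarith
  set c : ℝ := Λ * r ^ θ * (R^2) ^ β with hcdef
  have hrθ : 0 < r ^ θ := Real.rpow_pos_of_pos hr _
  have hcpos : 0 < c := by positivity
  set V : E → ℝ := fun y => c * (R^2 - ‖y - x₀‖^2) ^ (-(β:ℤ)) with hVdef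
  set η : ℝ := min (R^2/2) ((c/K') ^ (1/(β:ℝ))) with hηdef
  have hη : 0 < η := lt_min (by positivity) (Real.rpow_pos_of_pos (by positivity) _)
  have hηR : η ≤ R^2/2 := min_le_left _ _
  set ρ₁ : ℝ := Real.sqrt (R^2 - η) with hρ₁def
  have hρ₁0 : 0 ≤ ρ₁ := Real.sqrt_nonneg _
  have hρ₁R : ρ₁ < R := by
    rw [hρ₁def]
    have hR2 : (0:ℝ) < R^2 := by positivity
    calc Real.sqrt (R^2 - η) < Real.sqrt (R^2) := Real.sqrt_lt_sqrt (by linarith) (by linarith)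
    _ = R := Real.sqrt_sq hR.le
  have hR2 : (0:ℝ) < R^2 := by positivity
  have hρ₁sq : ρ₁^2 = R^2 - η := Real.sq_sqrt (by linarith)
  have hβ0 : (β:ℝ) ≠ 0 := by positivity
  have hβn0 : β ≠ 0 := by omega
  have hVbig : ∀ y : E, dist y x₀ < R → ρ₁ < dist y x₀ → K' < V y := by
    intro y hy1 hy2
    rw [dist_eq_norm] at hy1 hy2
    have hw : 0 < R^2 - ‖y - x₀‖^2 := wpos hy1
    have hwη : R^2 - ‖y - x₀‖^2 < η := by
      have hsq : ρ₁^2 < ‖y - x₀‖^2 := by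
        apply pow_lt_pow_left₀ hy2 hρ₁0 (by norm_num)
      linarith
    have hpow : (R^2 - ‖y - x₀‖^2)^β < c/K' := by
      calc (R^2 - ‖y-x₀‖^2)^β < η^β := pow_lt_pow_left₀ hwη hw.le hβn0
      _ ≤ (((c/K') ^ (1/(β:ℝ))))^β := pow_le_pow_left₀ hη.le (min_le_right _ _) β
      _ = c/K' := by
          rw [← Real.rpow_natCast ((c/K') ^ (1/(β:ℝ))) β, ← Real.rpow_mul (by positivity),
            one_div, inv_mul_cancel₀ hβ0, Real.rpow_one]
    rw [hVdef]
    simp only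
    rw [zpow_neg, zpow_natCast, ← div_eq_mul_inv, lt_div_iff₀ (pow_pos hw β)]
    calc K' * (R^2 - ‖y-x₀‖^2)^β < K' * (c/K') := by
          exact mul_lt_mul_of_pos_left hpow hK'
    _ = c := by field_simp
  have hCsub : closedBall x₀ ρ₁ ⊆ ball x₀ R := fun y hy =>
    mem_ball.mpr (lt_of_le_of_lt (mem_closedBall.mp hy) hρ₁R)
  have hballset : Metric.ball x₀ R = {y' : E | ‖y' - x₀‖ < R} := by
    ext y'; simp [mem_ball, dist_eq_norm]
  have hVC2 : ContDiffOn ℝ 2 V (ball x₀ R) := by rw [hballset, hVdef]; exact V_contDiffOn hR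
  have huvcont : ContinuousOn (fun y => u y - V y) (closedBall x₀ ρ₁) :=
    ((hu.continuousOn.mono (hCsub.trans ball_subset_closedBall)).sub
      (hVC2.continuousOn.mono hCsub))
  obtain ⟨z, hzC, hzmax⟩ := (isCompact_closedBall x₀ ρ₁).exists_isMaxOn
    ⟨x₀, mem_closedBall_self hρ₁0⟩ huvcont
  have hzball : z ∈ ball x₀ R := hCsub hzC
  by_cases hcase : u x₀ ≤ V x₀
  · have hVx₀ : V x₀ = Λ * r ^ θ := by
      have h2 : (0:ℝ) < (R^2)^β := pow_pos hR2 β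
      rw [hVdef]
      simp only [sub_self, norm_zero]
      rw [show ((0:ℝ)^2 : ℝ) = 0 by norm_num, sub_zero, zpow_neg, zpow_natCast, hcdef,
        mul_assoc, mul_inv_cancel₀ h2.ne', mul_one]
    calc u x₀ ≤ V x₀ := hcase
    _ = Λ * r ^ θ := hVx₀
  · exfalso
    push_neg at hcase
    -- z is a max of u - V on the whole ball
    have hx₀C : x₀ ∈ closedBall x₀ ρ₁ := mem_closedBall_self hρ₁0
    have hzx₀ : u x₀ - V x₀ ≤ u z - V z := hzmax hx₀C
    have hΔ : 0 < u z - V z := by linarith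
    have hmaxball : IsMaxOn (fun y => u y - V y) (ball x₀ R) z := by
      intro y hy
      by_cases hyC : y ∈ closedBall x₀ ρ₁
      · exact hzmax hyC
      · have hy2 : ρ₁ < dist y x₀ := not_le.mp (fun h => hyC (mem_closedBall.mpr h))
        have hy1 : dist y x₀ < R := mem_ball.mp hy
        have hVy := hVbig y hy1 hy2
        have huy : u y ≤ K := hKmax (ball_subset_closedBall hy)
        show u y - V y ≤ u z - V z
        have : u y - V y < 0 := by rw [hK'def] at hVy; linarith
        linarith
    have hlocmax : IsLocalMax (fun y => u y - V y) z :=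
      hmaxball.isLocalMax (isOpen_ball.mem_nhds hzball)
    have huball : ContDiffOn ℝ 2 u (ball x₀ R) := hu.mono ball_subset_closedBall
    have huvC2 : ContDiffOn ℝ 2 (fun y => u y - V y) (ball x₀ R) := huball.sub hVC2
    have hlap0 : lap (fun y => u y - V y) z ≤ 0 :=
      lap_nonpos_of_localmax isOpen_ball huvC2 hzball hlocmax
    have hlapsub := lap_sub isOpen_ball huball hVC2 hzball
    have hlapcmp : lap u z ≤ lap V z := by rw [hlapsub] at hlap0; linarith
    -- the PDE at z
    have hp0 := hpde z hzball
    set δ : ℝ := bdist Ω z with hδzdef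
    have hzCB : z ∈ closedBall x₀ R := ball_subset_closedBall hzball
    have hδz : r/2 ≤ δ ∧ δ ≤ 3/2*r := hδ z hzCB
    have hδz0 : 0 < δ := lt_of_lt_of_le (by positivity) hδz.1
    have huz0 : 0 ≤ u z := hu0 z hzCB
    have hznorm : ‖z - x₀‖ < R := by rw [← dist_eq_norm]; exact mem_ball.mp hzball
    set Q : ℝ := ‖z - x₀‖^2 with hQdef
    have hQ0 : 0 ≤ Q := by positivity
    set w : ℝ := R^2 - Q with hwdef
    have hw : 0 < w := by
      have := wpos (x₀ := x₀) (R := R) hznorm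
      rw [hwdef, hQdef]; linarith [this]
    have hwR : w ≤ R^2 := by rw [hwdef]; linarith
    have hQR : Q ≤ R^2 := by rw [hwdef] at hw; linarith
    set P : ℝ := ((w:ℝ)^β)⁻¹ with hPdef
    have hP : 0 < P := by positivity
    have hwz1 : w ^ (-(β:ℤ)) = P := by rw [zpow_neg, zpow_natCast, hPdef]
    have hwz2 : w ^ (-(β:ℤ)-1) = P / w := by
      rw [zpow_sub₀ hw.ne', hwz1, zpow_one]
    have hwz3 : w ^ (-(β:ℤ)-2) = P / w^2 := by
      rw [zpow_sub₀ hw.ne', hwz1, zpow_two, pow_two]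
    have hVz : V z = c * P := by
      rw [hVdef]
      simp only
      rw [← hQdef, ← hwdef, hwz1]
    have hVzpos : 0 < V z := by rw [hVz]; positivity
    have hlapV : lap V z = 2*c*(β:ℝ)*(N:ℝ) * (P/w) + 4*c*(β:ℝ)*((β:ℝ)+1) * (P/w^2) * Q := by
      rw [hVdef]
      rw [lap_V hznorm]
      rw [← hQdef, ← hwdef, hwz2, hwz3]
    -- bound on lap V
    have hb1 : lap V z ≤ C₀ * c * P * R^2 / w^2 := by
      rw [hlapV]
      have he : 2*c*(β:ℝ)*(N:ℝ) * (P/w) + 4*c*(β:ℝ)*((β:ℝ)+1) * (P/w^2) * Q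
          = (2*c*(β:ℝ)*(N:ℝ)*P*w + 4*c*(β:ℝ)*((β:ℝ)+1)*P*Q)/w^2 := by
        field_simp
      rw [he, hC₀def]
      apply div_le_div_of_nonneg_right ?_ (by positivity)
      have t1 : 2*c*(β:ℝ)*(N:ℝ)*P*w ≤ 2*c*(β:ℝ)*(N:ℝ)*P*R^2 :=
        mul_le_mul_of_nonneg_left hwR (by positivity)
      have t2 : 4*c*(β:ℝ)*((β:ℝ)+1)*P*Q ≤ 4*c*(β:ℝ)*((β:ℝ)+1)*P*R^2 :=
        mul_le_mul_of_nonneg_left hQR (by positivity)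
      have e : (2*(β:ℝ)*(N:ℝ) + 4*(β:ℝ)*((β:ℝ)+1))*c*P*R^2
          = 2*c*(β:ℝ)*(N:ℝ)*P*R^2 + 4*c*(β:ℝ)*((β:ℝ)+1)*P*R^2 := by ring
      linarith [t1, t2, e]
    -- quantities
    set D : ℝ := R^2 / w with hDdef
    have hD1 : 1 ≤ D := (one_le_div hw).mpr hwR
    have hD0 : 0 < D := lt_of_lt_of_le one_pos hD1
    set rs : ℝ := r ^ s with hrsdef
    have hrs : 0 < rs := Real.rpow_pos_of_pos hr s
    have hrs2 : r ^ (s-2) = rs / r^2 := by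
      rw [Real.rpow_sub hr, hrsdef]
      congr 1
      rw [show (2:ℝ) = ((2:ℕ):ℝ) by norm_num, Real.rpow_natCast]
    have hθp : θ * (p-1) = s - 2 := by rw [hθdef]; field_simp
    have hVzD : V z = Λ * r^θ * D^β := by
      rw [hVz, hcdef, hPdef, hDdef, div_pow]
      field_simp
    set Vp1 : ℝ := (V z) ^ (p-1) with hVp1def
    set Vp : ℝ := (V z) ^ p with hVpdef
    set Up : ℝ := (u z) ^ p with hUpdef
    have hVp1pos : 0 < Vp1 := Real.rpow_pos_of_pos hVzpos _
    have hVppos : 0 < Vp := Real.rpow_pos_of_pos hVzpos _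
    have hUp0 : 0 ≤ Up := Real.rpow_nonneg huz0 _
    have hVpsplit : Vp = Vp1 * V z := by
      have h := Real.rpow_add_one hVzpos.ne' (p-1)
      rw [show p - 1 + 1 = p by ring] at h
      rw [hVpdef, hVp1def, h]
    have hfact1' : X * (rs/r^2) * D^2 ≤ Vp1 := by
      have e1 : (r^θ)^(p-1) = rs / r^2 := by
        rw [← Real.rpow_mul hr.le, hθp, hrs2]
      have e2 : (D:ℝ)^2 ≤ (D^β:ℝ)^(p-1) := by
        rw [← Real.rpow_natCast D β, ← Real.rpow_mul hD0.le]
        rw [show (D:ℝ)^2 = D ^ (((2:ℕ):ℕ):ℝ) by rw [Real.rpow_natCast]]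
        apply Real.rpow_le_rpow_of_exponent_le hD1
        push_cast
        exact hβ2
      have e0 : Vp1 = X * (rs/r^2) * (D^β)^(p-1) := by
        rw [hVp1def, hVzD, Real.mul_rpow (by positivity) (by positivity),
          Real.mul_rpow hΛ.le hrθ.le, hΛp, e1]
      rw [e0]
      apply mul_le_mul_of_nonneg_left e2 (by positivity)
    have hfact1 : X * (rs/r^2) ≤ Vp1 := by
      have hD2 : (1:ℝ) ≤ D^2 := by
        calc (1:ℝ) = 1^2 := by norm_num
        _ ≤ D^2 := pow_le_pow_left₀ (by norm_num) hD1 2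
      have h := mul_le_mul_of_nonneg_left hD2 (show (0:ℝ) ≤ X*(rs/r^2) by positivity)
      calc X*(rs/r^2) = X*(rs/r^2)*1 := by ring
      _ ≤ X*(rs/r^2)*D^2 := by linarith [h]
      _ ≤ Vp1 := hfact1'
    -- the PDE lower bound (A)
    have hδs : δ ^ s ≤ c₁⁻¹ * rs := by
      rw [hc₁def, inv_inv]
      rcases le_or_gt 0 s with hs | hs
      · calc δ^s ≤ (3/2*r)^s := Real.rpow_le_rpow hδz0.le hδz.2 hs
        _ = (3/2:ℝ)^s * rs := by rw [hrsdef, ← Real.mul_rpow (by norm_num) hr.le]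
        _ ≤ (max ((1/2:ℝ)^s) ((3/2:ℝ)^s)) * rs :=
            mul_le_mul_of_nonneg_right (le_max_right _ _) hrs.le
      · calc δ^s ≤ (r/2)^s := Real.rpow_le_rpow_of_nonpos (by positivity) hδz.1 hs.le
        _ = (1/2:ℝ)^s * rs := by
            rw [hrsdef, ← Real.mul_rpow (by norm_num) hr.le]
            congr 1
            ring
        _ ≤ (max ((1/2:ℝ)^s) ((3/2:ℝ)^s)) * rs :=
            mul_le_mul_of_nonneg_right (le_max_left _ _) hrs.le
    have hδspos : 0 < δ^s := Real.rpow_pos_of_pos hδz0 s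
    have ha1 : c₁ * Up / rs ≤ Up / δ^s := by
      have h := div_le_div_of_nonneg_left hUp0 hδspos hδs
      have heq : Up / (c₁⁻¹ * rs) = c₁ * Up / rs := by
        field_simp
      rw [← heq]
      exact h
    have ha2 : μ / δ^2 * u z ≤ c₂ / r^2 * u z := by
      apply mul_le_mul_of_nonneg_right _ huz0
      have hd2 : r^2/4 ≤ δ^2 := by
        calc r^2/4 = (r/2)^2 := by ring
        _ ≤ δ^2 := pow_le_pow_left₀ (by positivity) hδz.1 2
      calc μ / δ^2 ≤ |μ| / δ^2 := by
            exact div_le_div_of_nonneg_right (le_abs_self μ) (by positivity)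
      _ ≤ |μ| / (r^2/4) := div_le_div_of_nonneg_left (abs_nonneg μ) (by positivity) hd2
      _ = c₂ / r^2 := by rw [hc₂def]; field_simp
    have hA : c₁ * Up / rs - c₂/r^2 * u z ≤ lap u z := by
      linarith [hp0, ha1, ha2]
        -- middle bound (B)
    have hm1 : c₁ * X * D^2 * V z / r^2 ≤ c₁ * Vp / rs := by
      have h1 : c₁ * (X * (rs/r^2) * D^2) * V z / rs ≤ c₁ * Vp1 * V z / rs := by
        apply div_le_div_of_nonneg_right ?_ hrs.le
        apply mul_le_mul_of_nonneg_right ?_ hVzpos.le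
        exact mul_le_mul_of_nonneg_left hfact1' hc₁.le
      have h2 : c₁ * (X * (rs/r^2) * D^2) * V z / rs = c₁ * X * D^2 * V z / r^2 := by
        field_simp
      calc c₁ * X * D^2 * V z / r^2 = c₁ * (X * (rs/r^2) * D^2) * V z / rs := h2.symm
      _ ≤ c₁ * Vp1 * V z / rs := h1
      _ = c₁ * Vp / rs := by rw [hVpsplit]; ring
    have hpoly : C₀*R^2*r^2 + c₂*w^2 ≤ c₁*X*(R^2)^2 := by
      have hR2t : R^2 = t^2*r^2 := by rw [hRdef]; ring
      have hXt : C₀ + c₂ * t^2 ≤ c₁ * X * t^2 := by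
        have h := mul_le_mul_of_nonneg_right hXa' (sq_nonneg t)
        have e : (C₀/t^2 + c₂)*t^2 = C₀ + c₂*t^2 := by field_simp
        linarith [h, e]
      have h1 : (C₀ + c₂*t^2) * (t^2*(r^2*r^2)) ≤ (c₁*X*t^2) * (t^2*(r^2*r^2)) :=
        mul_le_mul_of_nonneg_right hXt (by positivity)
      have h2 : c₂*w^2 ≤ c₂*((R^2)^2) :=
        mul_le_mul_of_nonneg_left (pow_le_pow_left₀ hw.le hwR 2) hc₂
      have e2 : c₂*((R^2)^2) = c₂*((t^2*r^2)^2) := by rw [← hR2t]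
      rw [hR2t]
      have e3 : (C₀ + c₂*t^2) * (t^2*(r^2*r^2)) = C₀*(t^2*r^2)*r^2 + c₂*t^2*(t^2*(r^2*r^2)) := by
        ring
      have e4 : (c₁*X*t^2) * (t^2*(r^2*r^2)) = c₁*X*(t^2*r^2)^2 := by ring
      have e5 : c₂*((t^2*r^2)^2) = c₂*t^2*(t^2*(r^2*r^2)) := by ring
      linarith [h1, h2, e2, e3, e4, e5]
    have hD2eq : D^2 = (R^2)^2/w^2 := by rw [hDdef, div_pow]
    have hm2 : C₀ * c * P * R^2 / w^2 + c₂/r^2 * V z ≤ c₁ * X * D^2 * V z / r^2 := by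
      rw [hVz, hD2eq]
      have hcP : (0:ℝ) < c*P := mul_pos hcpos hP
      have h3 : (C₀*R^2*r^2 + c₂*w^2) * (c*P) ≤ (c₁*X*(R^2)^2) * (c*P) :=
        mul_le_mul_of_nonneg_right hpoly hcP.le
      have e3 : c₁*X*((R^2)^2/w^2)*(c*P)/r^2 - (C₀*(c*P)*R^2/w^2 + c₂/r^2*(c*P))
          = ((c₁*X*(R^2)^2)*(c*P) - (C₀*R^2*r^2 + c₂*w^2)*(c*P)) / (w^2*r^2) := by
        field_simp
      have h4 : 0 ≤ ((c₁*X*(R^2)^2)*(c*P) - (C₀*R^2*r^2 + c₂*w^2)*(c*P)) / (w^2*r^2) :=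
        div_nonneg (by linarith [h3]) (by positivity)
      have e6 : C₀ * (c*P) * R^2 / w^2 = C₀ * c * P * R^2 / w^2 := by ring
      linarith [e3, h4, e6]
    have hB : lap V z ≤ c₁ * Vp / rs - c₂/r^2 * V z := by
      linarith [hb1, hm1, hm2]
    have hAB : c₁ * Up / rs - c₂/r^2 * u z ≤ c₁ * Vp / rs - c₂/r^2 * V z := by
      linarith [hA, hlapcmp, hB]
    -- the mean value inequality  u^p - V^p ≥ V^{p-1} (u - V)
    have huzpos : 0 < u z := lt_trans hVzpos (by linarith)
    have hfact3 : Vp1 * (u z - V z) ≤ Up - Vp := by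
      set x : ℝ := u z / V z with hxdef
      have hx1 : 1 ≤ x := (one_le_div hVzpos).mpr (by linarith)
      have hx0 : 0 ≤ x := by linarith
      have hxp : x ≤ x ^ p := by
        calc x = x ^ (1:ℝ) := (Real.rpow_one x).symm
        _ ≤ x ^ p := Real.rpow_le_rpow_of_exponent_le hx1 hp.le
      have hUx : Up = Vp * x^p := by
        rw [hUpdef, hVpdef, hxdef, ← Real.mul_rpow hVzpos.le (by positivity)]
        congr 1
        field_simp
      have hVx : Vp * x = Vp1 * u z := by
        rw [hVpsplit, hxdef]
        field_simp
      have hk : Vp * x ≤ Vp * x^p := mul_le_mul_of_nonneg_left hxp hVppos.le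
      have eg : Vp1 * (u z - V z) = Vp1 * u z - Vp1 * V z := by ring
      linarith [hk, hUx, hVx, hVpsplit, eg]
    -- conclude
    have hfinal : c₁ * X * ((u z - V z)/r^2) ≤ c₂ * ((u z - V z)/r^2) := by
      have h2 : c₁ * (Vp1 * (u z - V z)) / rs ≤ c₁ * (Up - Vp) / rs := by
        apply div_le_div_of_nonneg_right ?_ hrs.le
        exact mul_le_mul_of_nonneg_left hfact3 hc₁.le
      have h3 : c₁ * (X * (rs/r^2) * (u z - V z)) / rs ≤ c₁ * (Vp1 * (u z - V z)) / rs := by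
        apply div_le_div_of_nonneg_right ?_ hrs.le
        apply mul_le_mul_of_nonneg_left ?_ hc₁.le
        exact mul_le_mul_of_nonneg_right hfact1 hΔ.le
      have h1 : c₁ * (Up - Vp) / rs ≤ c₂ * ((u z - V z)/r^2) := by
        have e1 : c₁ * (Up - Vp)/rs = c₁*Up/rs - c₁*Vp/rs := by ring
        have e2 : c₂ * ((u z - V z)/r^2) = c₂/r^2*u z - c₂/r^2*V z := by ring
        linarith [hAB, e1, e2]
      have e5 : c₁ * (X * (rs/r^2) * (u z - V z)) / rs = c₁ * X * ((u z - V z)/r^2) := by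
        field_simp
      linarith [h1, h2, h3, e5]
    have hq : 0 < (u z - V z)/r^2 := div_pos hΔ (by positivity)
    have hfin2 : c₁ * X ≤ c₂ := le_of_mul_le_mul_right hfinal hq
    linarith [hXb', hfin2]


lemma compl_nonempty (hN : 2 ≤ N) {Ω : Set E} (hΩb : Bornology.IsBounded Ω) :
    (Ωᶜ : Set E).Nonempty := by
  by_contra h
  rw [Set.not_nonempty_iff_eq_empty, compl_empty_iff] at h
  subst h
  obtain ⟨C, hC⟩ := (Metric.isBounded_iff_subset_closedBall (0 : E)).mp hΩb
  set i0 : Fin N := ⟨0, by omega⟩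
  have := hC (mem_univ (EuclideanSpace.single i0 (|C|+1)))
  rw [mem_closedBall, dist_zero_right, EuclideanSpace.norm_single] at this
  have h1 := le_abs_self C
  have h2 := abs_nonneg C
  rw [Real.norm_eq_abs, abs_of_nonneg (by linarith)] at this
  linarith

lemma bdist_pos_of_mem {Ω : Set E} (hΩo : IsOpen Ω) (hne : (Ωᶜ : Set E).Nonempty)
    {x : E} (hx : x ∈ Ω) : 0 < bdist Ω x := by
  have := (IsClosed.notMem_iff_infDist_pos (isClosed_compl_iff.mpr hΩo) hne).mp
    (by simpa using hx)
  exact this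

lemma mem_of_bdist_pos {Ω : Set E} {y : E} (h : 0 < bdist Ω y) : y ∈ Ω := by
  by_contra hy
  have : bdist Ω y = 0 := Metric.infDist_zero_of_mem (by simpa using hy)
  linarith

lemma bdist_lip {Ω : Set E} (y x : E) : |bdist Ω y - bdist Ω x| ≤ dist y x := by
  have := (lipschitz_infDist_pt (Ωᶜ : Set E)).dist_le_mul y x
  rw [Real.dist_eq] at this
  simpa [bdist] using this


end Aux

/-- (Keller–Osserman bound.) Let `μ, s ∈ ℝ`, `p > 1`, and let `(d, c)`
be a regularized distance on `Ω`. If `u` is a sub-solution of `(*)` on `Ω_ρ`, then for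
every `ρ' ∈ (0, ρ)` there is `γ⋆ > 0` (depending on `u`) with
`u ≤ γ⋆·δ^{(s-2)/(p-1)}` on `Ω_{ρ'}`. If `u` is a sub-solution on all of `Ω`, then `γ⋆`
can be chosen independently of `u`. -/
theorem stmt12 {N : ℕ} (hN : 2 ≤ N) (Ω : Set (EuclideanSpace ℝ (Fin N)))
    (hΩo : IsOpen Ω) (hΩne : Ω.Nonempty) (hΩb : Bornology.IsBounded Ω)
    (μ s p : ℝ) (hp : 1 < p)
    (d : EuclideanSpace ℝ (Fin N) → ℝ) (c : ℝ) (hd : RegDist Ω d c) :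
    (∀ ρ, 0 < ρ → ∀ u : EuclideanSpace ℝ (Fin N) → ℝ, SubSol Ω μ s p (collar Ω ρ) u →
      ∀ ρ', 0 < ρ' → ρ' < ρ →
        ∃ γ, 0 < γ ∧ ∀ x ∈ collar Ω ρ', u x ≤ γ * bdist Ω x ^ ((s - 2) / (p - 1))) ∧
    (∃ γ, 0 < γ ∧ ∀ u : EuclideanSpace ℝ (Fin N) → ℝ, SubSol Ω μ s p Ω u →
      ∀ x ∈ Ω, u x ≤ γ * bdist Ω x ^ ((s - 2) / (p - 1))) := by
  have hne : (Ωᶜ : Set (EuclideanSpace ℝ (Fin N))).Nonempty := compl_nonempty hN hΩb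
  constructor
  · intro ρ hρ u hsub ρ' hρ'0 hρ'ρ
    set t : ℝ := min (1/2) ((ρ - ρ')/ρ') with htdef
    have ht0 : 0 < t := lt_min (by norm_num) (div_pos (by linarith) hρ'0)
    have ht12 : t ≤ 1/2 := min_le_left _ _
    have htρ : t ≤ (ρ - ρ')/ρ' := min_le_right _ _
    obtain ⟨Λ, hΛ, hko⟩ := ko_ball Ω μ s p t hp ht0 ht12
    refine ⟨Λ, hΛ, ?_⟩
    intro x hx
    have hxΩ : x ∈ Ω := hx.1
    have hbd : bdist Ω x < ρ' := hx.2
    have hr : 0 < bdist Ω x := bdist_pos_of_mem hΩo hne hxΩ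
    have hsubset : closedBall x (t * bdist Ω x) ⊆ collar Ω ρ := by
      intro y hy
      have hlip := bdist_lip (Ω := Ω) y x
      have hdist : dist y x ≤ t * bdist Ω x := mem_closedBall.mp hy
      rw [abs_le] at hlip
      have h1 : (1/2) * bdist Ω x ≤ bdist Ω y := by nlinarith
      have hyΩ : y ∈ Ω := mem_of_bdist_pos (by nlinarith)
      have h2 : bdist Ω y < ρ := by
        have htρ' : t * ρ' ≤ ρ - ρ' := (le_div_iff₀ hρ'0).mp htρ
        nlinarith
      exact ⟨hyΩ, h2⟩
    exact hko u x hr (hsub.1.mono hsubset) (fun y hy => hsub.2.1 y (hsubset hy))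
      (fun y hy => hsub.2.2 y (hsubset (ball_subset_closedBall hy)))
  · obtain ⟨Λ, hΛ, hko⟩ := ko_ball Ω μ s p (1/2) hp (by norm_num) le_rfl
    refine ⟨Λ, hΛ, ?_⟩
    intro u hsub x hx
    have hr : 0 < bdist Ω x := bdist_pos_of_mem hΩo hne hx
    have hsubset : closedBall x ((1/2) * bdist Ω x) ⊆ Ω := by
      intro y hy
      have hlip := bdist_lip (Ω := Ω) y x
      have hdist : dist y x ≤ (1/2) * bdist Ω x := mem_closedBall.mp hy
      rw [abs_le] at hlip
      exact mem_of_bdist_pos (by nlinarith)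
    exact hko u x hr (hsub.1.mono hsubset) (fun y hy => hsub.2.1 y (hsubset hy))
      (fun y hy => hsub.2.2 y (hsubset (ball_subset_closedBall hy)))
end
end

section
/- Let μ, s ∈ ℝ, p > 1 and 0 < R < ρ ≤ ρ₀. Let η ∈ C²((0, ρ)) with η > 0, and suppose the radial function x ↦ η(δ(x)) is a super-harmonic of L_μ on Ω_ρ. Let H̄ ∈ ℝ satisfy Δδ(x) ≥ −H̄ for all x ∈ Ω_ρ. Let v ∈ C²((R, ρ)) with v > 0 and v' < 0 on (R, ρ) satisfy the ODE −v''(r) − (2η'(r)/η(r) − H̄)·v'(r) + (η(r)^{p−1}/r^s)·v(r)^p = 0 for all r ∈ (R, ρ). Then z(x) := v(δ(x))·η(δ(x)) is a super-solution of (*) on Ω_{R,ρ}. -/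
open Set Metric MeasureTheory Real

noncomputable section

lemma lap_comp {N : ℕ} {d : EuclideanSpace ℝ (Fin N) → ℝ} (g : ℝ → ℝ)
    {U : Set (EuclideanSpace ℝ (Fin N))} {t : Set ℝ} {x : EuclideanSpace ℝ (Fin N)}
    (hU : IsOpen U) (ht : IsOpen t) (hx : x ∈ U) (hmap : Set.MapsTo d U t)
    (hd : ContDiffOn ℝ 2 d U) (hg : ContDiffOn ℝ 2 g t) :
    lap (fun y => g (d y)) x =
      deriv (deriv g) (d x) * ∑ i : Fin N, (fderiv ℝ d x (EuclideanSpace.single i 1)) ^ 2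
        + deriv g (d x) * lap d x := by
  have hdx : d x ∈ t := hmap hx
  have hg1 : ContDiffOn ℝ 1 (deriv g) t := hg.deriv_of_isOpen ht (by norm_num)
  have hd1 : ContDiffOn ℝ 1 (fderiv ℝ d) U := hd.fderiv_of_isOpen hU (by norm_num)
  have hdd : ∀ y ∈ U, DifferentiableAt ℝ d y := fun y hy =>
    ((hd y hy).contDiffAt (hU.mem_nhds hy)).differentiableAt (by norm_num)
  have hgd : ∀ r ∈ t, DifferentiableAt ℝ g r := fun r hr =>
    ((hg r hr).contDiffAt (ht.mem_nhds hr)).differentiableAt (by norm_num)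
  have hev : ∀ i : Fin N, (fun y => fderiv ℝ (fun z => g (d z)) y (EuclideanSpace.single i 1))
      =ᶠ[nhds x] fun y => deriv g (d y) * fderiv ℝ d y (EuclideanSpace.single i 1) := by
    intro i
    filter_upwards [hU.mem_nhds hx] with y hy
    have h1 : HasFDerivAt (fun z => g (d z)) (deriv g (d y) • fderiv ℝ d y) y :=
      HasDerivAt.comp_hasFDerivAt y ((hgd _ (hmap hy)).hasDerivAt) ((hdd y hy).hasFDerivAt)
    rw [h1.fderiv]
    simp [smul_eq_mul]
  have hhd : HasDerivAt (deriv g) (deriv (deriv g) (d x)) (d x) :=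
    (((hg1 _ hdx).contDiffAt (ht.mem_nhds hdx)).differentiableAt (by norm_num)).hasDerivAt
  have hcomp : HasFDerivAt (fun y => deriv g (d y)) (deriv (deriv g) (d x) • fderiv ℝ d x) x :=
    HasDerivAt.comp_hasFDerivAt x hhd (hdd x hx).hasFDerivAt
  have hfd : DifferentiableAt ℝ (fderiv ℝ d) x :=
    ((hd1 x hx).contDiffAt (hU.mem_nhds hx)).differentiableAt (by norm_num)
  have hterm : ∀ i : Fin N,
      fderiv ℝ (fun y => fderiv ℝ (fun z => g (d z)) y (EuclideanSpace.single i 1)) x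
        (EuclideanSpace.single i 1)
      = deriv (deriv g) (d x) * (fderiv ℝ d x (EuclideanSpace.single i 1)) ^ 2
        + deriv g (d x) *
          fderiv ℝ (fun y => fderiv ℝ d y (EuclideanSpace.single i 1)) x
            (EuclideanSpace.single i 1) := by
    intro i
    rw [(hev i).fderiv_eq]
    have hb : DifferentiableAt ℝ (fun y => fderiv ℝ d y (EuclideanSpace.single i 1)) x :=
      hfd.clm_apply (differentiableAt_const _)
    rw [fderiv_fun_mul hcomp.differentiableAt hb]
    simp only [ContinuousLinearMap.add_apply, ContinuousLinearMap.smul_apply, smul_eq_mul]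
    rw [hcomp.fderiv]
    simp only [ContinuousLinearMap.smul_apply, smul_eq_mul]
    ring
  unfold lap
  simp_rw [hterm]
  rw [Finset.sum_add_distrib, ← Finset.mul_sum, ← Finset.mul_sum]

lemma sum_sq_fderiv_eq {N : ℕ} (d : EuclideanSpace ℝ (Fin N) → ℝ) (x : EuclideanSpace ℝ (Fin N)) :
    ∑ i : Fin N, (fderiv ℝ d x (EuclideanSpace.single i 1)) ^ 2 = ‖gradient d x‖ ^ 2 := by
  have h : ∀ i : Fin N, fderiv ℝ d x (EuclideanSpace.single i 1) = gradient d x i := by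
    intro i
    have h1 : (inner ℝ (gradient d x) (EuclideanSpace.single i 1 : EuclideanSpace ℝ (Fin N)) : ℝ)
        = fderiv ℝ d x (EuclideanSpace.single i 1) := by
      unfold gradient
      rw [InnerProductSpace.toDual_symm_apply]
    rw [← h1, EuclideanSpace.inner_single_right]
    simp
  simp_rw [h]
  rw [EuclideanSpace.norm_eq, Real.sq_sqrt (by positivity)]
  simp [sq_abs]

lemma collar_isOpen {N : ℕ} {Ω : Set (EuclideanSpace ℝ (Fin N))} (hΩo : IsOpen Ω) (ρ : ℝ) :
    IsOpen (collar Ω ρ) := by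
  have : collar Ω ρ = Ω ∩ (bdist Ω) ⁻¹' (Set.Iio ρ) := by
    ext y; simp [collar, bdist]
  rw [this]
  exact hΩo.inter (IsOpen.preimage (continuous_infDist_pt _) isOpen_Iio)

/-- Let `0 < R < ρ ≤ ρ₀`, let `η ∈ C²((0,ρ))` be positive with
`x ↦ η(δ(x))` a super-harmonic of `L_μ` on `Ω_ρ`, let `H̄` satisfy `Δδ ≥ -H̄` on `Ω_ρ`,
and let `v ∈ C²((R,ρ))` be positive and decreasing, solving the ODE
`-v'' - (2η'/η - H̄)v' + (η^{p-1}/r^s)v^p = 0` on `(R, ρ)`. Then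
`z(x) = v(δ(x))·η(δ(x))` is a super-solution of `(*)` on `Ω_{R,ρ}`. -/
theorem stmt13 {N : ℕ} (hN : 2 ≤ N) (Ω : Set (EuclideanSpace ℝ (Fin N)))
    (hΩo : IsOpen Ω) (hΩne : Ω.Nonempty) (hΩb : Bornology.IsBounded Ω)
    (ρ₀ : ℝ) (hρ₀ : GoodCollar Ω ρ₀)
    (μ s p : ℝ) (hp : 1 < p) (R ρ : ℝ) (hR : 0 < R) (hRρ : R < ρ) (hρρ₀ : ρ ≤ ρ₀)
    (η : ℝ → ℝ) (hη : ContDiffOn ℝ 2 η (Set.Ioo 0 ρ)) (hηpos : ∀ r ∈ Set.Ioo 0 ρ, 0 < η r)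
    (hηsuper : SuperHarm Ω μ (collar Ω ρ) (fun x => η (bdist Ω x)))
    (Hbar : ℝ) (hH : ∀ x ∈ collar Ω ρ, -Hbar ≤ lap (bdist Ω) x)
    (v : ℝ → ℝ) (hv : ContDiffOn ℝ 2 v (Set.Ioo R ρ))
    (hvpos : ∀ r ∈ Set.Ioo R ρ, 0 < v r) (hvdec : ∀ r ∈ Set.Ioo R ρ, deriv v r < 0)
    (hODE : ∀ r ∈ Set.Ioo R ρ,
      -(deriv (deriv v) r) - (2 * deriv η r / η r - Hbar) * deriv v r
        + (η r ^ (p - 1) / r ^ s) * v r ^ p = 0) :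
    SuperSol Ω μ s p (ring' Ω R ρ) (fun x => v (bdist Ω x) * η (bdist Ω x)) := by
  obtain ⟨hρ₀pos, hdC2, hgrad, -⟩ := hρ₀
  have hcont : Continuous (bdist Ω) := continuous_infDist_pt _
  have hsub1 : Set.Ioo R ρ ⊆ Set.Ioo 0 ρ := Set.Ioo_subset_Ioo hR.le le_rfl
  have hrsub : ring' Ω R ρ ⊆ collar Ω ρ₀ := fun y hy =>
    ⟨hy.1, lt_of_lt_of_le hy.2.2 hρρ₀⟩
  have hmaps : Set.MapsTo (bdist Ω) (ring' Ω R ρ) (Set.Ioo R ρ) := fun y hy => ⟨hy.2.1, hy.2.2⟩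
  have hU0 : IsOpen (collar Ω ρ₀) := collar_isOpen hΩo ρ₀
  -- derivative formulas for the product
  have hη1 : ContDiffOn ℝ 1 (deriv η) (Set.Ioo 0 ρ) := hη.deriv_of_isOpen isOpen_Ioo (by norm_num)
  have hv1 : ContDiffOn ℝ 1 (deriv v) (Set.Ioo R ρ) := hv.deriv_of_isOpen isOpen_Ioo (by norm_num)
  have hdiffv : ∀ r ∈ Set.Ioo R ρ, DifferentiableAt ℝ v r := fun r hr =>
    ((hv r hr).contDiffAt (isOpen_Ioo.mem_nhds hr)).differentiableAt (by norm_num)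
  have hdiffη : ∀ r ∈ Set.Ioo R ρ, DifferentiableAt ℝ η r := fun r hr =>
    ((hη r (hsub1 hr)).contDiffAt (isOpen_Ioo.mem_nhds (hsub1 hr))).differentiableAt (by norm_num)
  have hwd : ∀ r ∈ Set.Ioo R ρ, deriv (fun t => v t * η t) r
      = deriv v r * η r + v r * deriv η r := fun r hr =>
    deriv_mul (hdiffv r hr) (hdiffη r hr)
  have hwdd : ∀ r ∈ Set.Ioo R ρ, deriv (deriv (fun t => v t * η t)) r
      = deriv (deriv v) r * η r + 2 * (deriv v r * deriv η r) + v r * deriv (deriv η) r := by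
    intro r hr
    have hev : deriv (fun t => v t * η t) =ᶠ[nhds r]
        fun t => deriv v t * η t + v t * deriv η t := by
      filter_upwards [isOpen_Ioo.mem_nhds hr] with t ht
      exact hwd t ht
    rw [hev.deriv_eq]
    have hdv' : DifferentiableAt ℝ (deriv v) r :=
      ((hv1 r hr).contDiffAt (isOpen_Ioo.mem_nhds hr)).differentiableAt (by norm_num)
    have hdη' : DifferentiableAt ℝ (deriv η) r :=
      ((hη1 _ (hsub1 hr)).contDiffAt (isOpen_Ioo.mem_nhds (hsub1 hr))).differentiableAt (by norm_num)
    rw [deriv_fun_add (f := fun t => deriv v t * η t) (g := fun t => v t * deriv η t) ((hdv'.mul (hdiffη r hr))) ((hdiffv r hr).mul hdη'),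
      deriv_fun_mul hdv' (hdiffη r hr), deriv_fun_mul (hdiffv r hr) hdη']
    ring
  refine ⟨?_, ?_, ?_⟩
  · exact (hv.mul (hη.mono hsub1)).comp (hdC2.mono hrsub) hmaps
  · intro x hx
    exact mul_pos (hvpos _ (hmaps hx)) (hηpos _ (hsub1 (hmaps hx)))
  · intro x hx
    have hxΩ : x ∈ Ω := hx.1
    have hrI : bdist Ω x ∈ Set.Ioo R ρ := hmaps hx
    have hxρ : x ∈ collar Ω ρ := ⟨hxΩ, hrI.2⟩
    have hxcol₀ : x ∈ collar Ω ρ₀ := hrsub hx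
    set r : ℝ := bdist Ω x with hr_def
    have hr0 : 0 < r := lt_trans hR hrI.1
    have hS : ∑ i : Fin N, (fderiv ℝ (bdist Ω) x (EuclideanSpace.single i 1)) ^ 2 = 1 := by
      rw [sum_sq_fderiv_eq, hgrad x hxcol₀]; norm_num
    -- open neighborhoods for the chain rule
    have hUw : IsOpen (collar Ω ρ₀ ∩ bdist Ω ⁻¹' Set.Ioo R ρ) :=
      hU0.inter (IsOpen.preimage hcont isOpen_Ioo)
    have hU1 : IsOpen (collar Ω ρ₀ ∩ bdist Ω ⁻¹' Set.Ioo 0 ρ) :=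
      hU0.inter (IsOpen.preimage hcont isOpen_Ioo)
    have hxw : x ∈ collar Ω ρ₀ ∩ bdist Ω ⁻¹' Set.Ioo R ρ := ⟨hxcol₀, hrI⟩
    have hx1 : x ∈ collar Ω ρ₀ ∩ bdist Ω ⁻¹' Set.Ioo 0 ρ := ⟨hxcol₀, hsub1 hrI⟩
    have hlapz : lap (fun y => v (bdist Ω y) * η (bdist Ω y)) x
        = deriv (deriv (fun t => v t * η t)) r
            * ∑ i : Fin N, (fderiv ℝ (bdist Ω) x (EuclideanSpace.single i 1)) ^ 2
          + deriv (fun t => v t * η t) r * lap (bdist Ω) x :=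
      lap_comp (fun t => v t * η t) hUw isOpen_Ioo hxw (fun y hy => hy.2)
        (hdC2.mono Set.inter_subset_left) (hv.mul (hη.mono hsub1))
    have hlapη : lap (fun y => η (bdist Ω y)) x
        = deriv (deriv η) r
            * ∑ i : Fin N, (fderiv ℝ (bdist Ω) x (EuclideanSpace.single i 1)) ^ 2
          + deriv η r * lap (bdist Ω) x :=
      lap_comp η hU1 isOpen_Ioo hx1 (fun y hy => hy.2)
        (hdC2.mono Set.inter_subset_left) hη
    rw [hS, mul_one] at hlapz hlapη
    rw [hwdd r hrI, hwd r hrI] at hlapz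
    have hsup := hηsuper.2 x hxρ
    rw [hlapη] at hsup
    -- atoms
    have ha : 0 < v r := hvpos r hrI
    have hb : 0 < η r := hηpos r (hsub1 hrI)
    have ha' : deriv v r < 0 := hvdec r hrI
    have hT : (0:ℝ) < r ^ s := Real.rpow_pos_of_pos hr0 s
    have hLH : -Hbar ≤ lap (bdist Ω) x := hH x hxρ
    have hode := hODE r hrI
    have hbp : η r ^ (p - 1) * η r = η r ^ p := by
      rw [Real.rpow_sub hb, Real.rpow_one, div_mul_cancel₀ _ (ne_of_gt hb)]
    have hab : (v r * η r) ^ p = v r ^ p * η r ^ p := Real.mul_rpow ha.le hb.le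
    have h1 : 2 * deriv η r / η r * deriv v r * η r = 2 * (deriv η r * deriv v r) := by
      field_simp
    have hode' : -(deriv (deriv v) r) * η r - 2 * (deriv η r * deriv v r)
        + Hbar * (deriv v r * η r) + (η r ^ p * v r ^ p) / r ^ s = 0 := by
      linear_combination η r * hode + h1 - (v r ^ p / r ^ s) * hbp
    have key : -(lap (fun y => v (bdist Ω y) * η (bdist Ω y)) x) - μ / r ^ 2 * (v r * η r)
          + (v r * η r) ^ p / r ^ s
        = v r * (-(deriv (deriv η) r + deriv η r * lap (bdist Ω) x) - μ / r ^ 2 * η r)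
          + (-(deriv v r)) * η r * (lap (bdist Ω) x + Hbar) := by
      rw [hlapz, hab]
      linear_combination hode'
    have t1 : 0 ≤ v r * (-(deriv (deriv η) r + deriv η r * lap (bdist Ω) x) - μ / r ^ 2 * η r) :=
      mul_nonneg ha.le hsup
    have t2 : 0 ≤ (-(deriv v r)) * η r * (lap (bdist Ω) x + Hbar) :=
      mul_nonneg (mul_nonneg (by linarith) hb.le) (by linarith)
    have := add_nonneg t1 t2
    rw [← key] at this
    exact this
end
end

section
/- (ODE Lemma, case μ < 1/4.) Let μ < 1/4, p > 1, s ≥ β₋(p − 1) + 2, ε ∈ (0, min{1, √(1 − 4μ)}), H̄ ∈ ℝ, and set η(r) := r^{β₋}(1 + r^ε) for r > 0. Then there exists ρ̄ > 0 such that for every ρ ∈ (0, ρ̄) there is no function v ∈ C²((0, ρ]) with v > 0 on (0, ρ), v' < 0 on (0, ρ), v(ρ) = 0 and v'(ρ) < 0, satisfying −v''(r) − (2η'(r)/η(r) − H̄)·v'(r) + (η(r)^{p−1}/r^s)·v(r)^p = 0 for all r ∈ (0, ρ). (Equivalently: any decreasing positive solution starting from v(ρ) = 0, v'(ρ) = −κ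 < 0 blows up at some R_κ > 0 and cannot be continued down to r = 0.) -/
open Set Metric MeasureTheory Real

noncomputable section

theorem cmp_aux {x y : ℝ} {f g : ℝ → ℝ} {f' g' : ℝ → ℝ} (hxy : x ≤ y)
    (hf : ∀ t ∈ Set.Icc x y, HasDerivAt f (f' t) t)
    (hg : ∀ t ∈ Set.Icc x y, HasDerivAt g (g' t) t)
    (h : ∀ t ∈ Set.Icc x y, f' t ≤ g' t) :
    f y - f x ≤ g y - g x := by
  have H : MonotoneOn (fun t => g t - f t) (Set.Icc x y) := by
    apply monotoneOn_of_deriv_nonneg (convex_Icc x y)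
    · exact fun t ht => ((hg t ht).sub (hf t ht)).continuousAt.continuousWithinAt
    · intro t ht
      rw [interior_Icc] at ht
      exact (((hg t (Ioo_subset_Icc_self ht)).sub
        (hf t (Ioo_subset_Icc_self ht))).differentiableAt).differentiableWithinAt
    · intro t ht
      rw [interior_Icc] at ht
      rw [show (fun t => g t - f t) = g - f from rfl,
        ((hg t (Ioo_subset_Icc_self ht)).sub (hf t (Ioo_subset_Icc_self ht))).deriv]
      have := h t (Ioo_subset_Icc_self ht)
      linarith
  have := H (left_mem_Icc.2 hxy) (right_mem_Icc.2 hxy) hxy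
  simp only at this
  linarith

set_option maxHeartbeats 2000000 in
theorem ode_blowup (K p ρ : ℝ) (hK : 2 ≤ K) (hp : 1 < p) (hρ : 0 < ρ)
    (v w : ℝ → ℝ)
    (hv : ∀ r ∈ Set.Ioo 0 ρ, 0 < v r)
    (hvd : ∀ r ∈ Set.Ioo 0 ρ, HasDerivAt v (-(w r)) r)
    (hw0 : ∀ r ∈ Set.Ioo 0 ρ, 0 < w r)
    (hwd : ∀ r ∈ Set.Ioo 0 ρ, HasDerivAt w (deriv w r) r)
    (hw' : ∀ r ∈ Set.Ioo 0 ρ, deriv w r ≤ K / r * w r - v r ^ p / r ^ 2) :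
    False := by
  have hp0 : (0:ℝ) ≤ p := by linarith
  have hK0 : (0:ℝ) < K := by linarith
  have hsub : ∀ {x y : ℝ}, x ∈ Set.Ioo (0:ℝ) ρ → y ∈ Set.Ioo (0:ℝ) ρ →
      Set.Icc x y ⊆ Set.Ioo (0:ℝ) ρ := by
    intro x y hx hy t ht
    exact ⟨lt_of_lt_of_le hx.1 ht.1, lt_of_le_of_lt ht.2 hy.2⟩
  -- v is decreasing
  have hdec : ∀ x ∈ Set.Ioo (0:ℝ) ρ, ∀ y ∈ Set.Ioo (0:ℝ) ρ, x ≤ y → v y ≤ v x := by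
    intro x hx y hy hxy
    have h := cmp_aux (f := v) (g := fun _ => (0:ℝ)) (f' := fun t => -(w t))
      (g' := fun _ => (0:ℝ)) hxy (fun t ht => hvd t (hsub hx hy ht))
      (fun t _ => hasDerivAt_const t 0)
      (fun t ht => by show -(w t) ≤ (0:ℝ); have := hw0 t (hsub hx hy ht); linarith)
    simp only [sub_self] at h
    linarith
  -- L1 : lower bound for w on [R/2, R]
  have hL1 : ∀ R, 0 < R → R < ρ → ∀ r, R/2 ≤ r → r ≤ R →
      Real.exp (-K) * (v R ^ p * ((R - r)/R^2)) ≤ w r := by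
    intro R hR0 hRρ r hr1 hr2
    have hRmem : R ∈ Set.Ioo (0:ℝ) ρ := ⟨hR0, hRρ⟩
    have hrmem : r ∈ Set.Ioo (0:ℝ) ρ := ⟨by linarith, by linarith⟩
    set b := 2*K/R with hbdef
    have hb0 : 0 < b := by positivity
    have hc0 : 0 < v R ^ p := Real.rpow_pos_of_pos (hv R hRmem) p
    have hkey : ∀ t ∈ Set.Icc r R, deriv w t - b * w t ≤ -(v t ^ p / R^2) := by
      intro t ht
      have htm : t ∈ Set.Ioo (0:ℝ) ρ := hsub hrmem hRmem ht
      have ht0 : 0 < t := htm.1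
      have h1 := hw' t htm
      have h2 : K/t ≤ b := by
        rw [hbdef, div_le_div_iff₀ ht0 hR0]
        nlinarith [ht.1]
      have hvp : 0 < v t ^ p := Real.rpow_pos_of_pos (hv t htm) p
      have h3 : v t ^ p / R^2 ≤ v t ^ p / t^2 := by
        rw [div_le_div_iff₀ (by positivity) (by positivity)]
        nlinarith [mul_le_mul_of_nonneg_left (by nlinarith [ht.2] : t^2 ≤ R^2) hvp.le]
      have hwt := (hw0 t htm).le
      nlinarith [mul_le_mul_of_nonneg_right h2 hwt]
    have hptwise : ∀ t ∈ Set.Icc r R,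
        Real.exp (b*(R-t)) * (b * -1) * w t + Real.exp (b*(R-t)) * deriv w t
          + v R ^ p/R^2 * 1 ≤ (0:ℝ) := by
      intro t ht
      have htm : t ∈ Set.Ioo (0:ℝ) ρ := hsub hrmem hRmem ht
      have hkt := hkey t ht
      have hwt := (hw0 t htm).le
      have hex1 : (1:ℝ) ≤ Real.exp (b*(R-t)) :=
        Real.one_le_exp (mul_nonneg hb0.le (by linarith [ht.2]))
      have hcle : v R ^ p ≤ v t ^ p :=
        Real.rpow_le_rpow (hv R hRmem).le (hdec t htm R hRmem ht.2) hp0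
      have hXle : deriv w t - b * w t ≤ -(v R ^ p/R^2) := by
        have h4 : v R ^ p / R^2 ≤ v t ^ p / R^2 := by gcongr
        linarith
      have hX0 : deriv w t - b * w t ≤ 0 := by
        have : (0:ℝ) < v R ^ p/R^2 := by positivity
        linarith
      have hprod : Real.exp (b*(R-t)) * (deriv w t - b * w t) ≤
          1 * (deriv w t - b * w t) := mul_le_mul_of_nonpos_right hex1 hX0
      have hprod2 : Real.exp (b*(R-t)) * (deriv w t - b * w t) ≤ -(v R ^ p/R^2) := by
        linarith
      nlinarith [hprod2]
    have hcmp := cmp_aux (x := r) (y := R)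
      (f := fun t => Real.exp (b*(R-t)) * w t + v R ^ p/R^2 * t)
      (g := fun _ => (0:ℝ))
      (f' := fun t => Real.exp (b*(R-t)) * (b * -1) * w t
        + Real.exp (b*(R-t)) * deriv w t + v R ^ p/R^2 * 1)
      (g' := fun _ => (0:ℝ)) hr2
      (fun t ht => ((((hasDerivAt_id t).const_sub R).const_mul b).exp.mul
        (hwd t (hsub hrmem hRmem ht))).add ((hasDerivAt_id t).const_mul (v R ^ p/R^2)))
      (fun t _ => hasDerivAt_const t 0)
      hptwise
    simp only [sub_self, mul_zero, Real.exp_zero, one_mul] at hcmp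
    have hwR := (hw0 R hRmem).le
    have hfin : v R ^ p * ((R - r)/R^2) ≤ Real.exp (b*(R-r)) * w r := by
      have e0 : v R ^ p * ((R-r)/R^2) = v R ^ p/R^2 * R - v R ^ p/R^2 * r := by ring
      linarith [hcmp]
    have hbK : b * (R - r) ≤ K := by
      rw [hbdef, div_mul_eq_mul_div, div_le_iff₀ hR0]
      nlinarith
    have e1 : Real.exp (-(b*(R-r))) * (Real.exp (b*(R-r)) * w r) = w r := by
      rw [← mul_assoc, ← Real.exp_add]
      simp
    calc Real.exp (-K) * (v R ^ p * ((R-r)/R^2))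
        ≤ Real.exp (-(b*(R-r))) * (v R ^ p * ((R-r)/R^2)) := by
          apply mul_le_mul_of_nonneg_right (Real.exp_le_exp.2 (by linarith))
          exact mul_nonneg hc0.le (div_nonneg (by linarith) (sq_nonneg R))
      _ ≤ Real.exp (-(b*(R-r))) * (Real.exp (b*(R-r)) * w r) :=
          mul_le_mul_of_nonneg_left hfin (Real.exp_nonneg _)
      _ = w r := e1
  -- L2 : growth step
  have hL2 : ∀ R, 0 < R → R < ρ → v R + Real.exp (-K)/16 * v R ^ p ≤ v (R/2) := by
    intro R hR0 hRρ
    have hRmem : R ∈ Set.Ioo (0:ℝ) ρ := ⟨hR0, hRρ⟩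
    have h34 : (3*R/4) ∈ Set.Ioo (0:ℝ) ρ := ⟨by linarith, by linarith⟩
    have h12 : (R/2) ∈ Set.Ioo (0:ℝ) ρ := ⟨by linarith, by linarith⟩
    have hc0 : 0 < v R ^ p := Real.rpow_pos_of_pos (hv R hRmem) p
    have hd0 : 0 < Real.exp (-K) * (v R ^ p) / (4*R) := by positivity
    have hptw : ∀ t ∈ Set.Icc (R/2) (3*R/4),
        -(w t) ≤ -(Real.exp (-K) * (v R ^ p) / (4*R)) := by
      intro t ht
      have hwl := hL1 R hR0 hRρ t ht.1 (by linarith [ht.2])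
      have hRt : R/4 ≤ R - t := by linarith [ht.2]
      have h2 : (R/4)/R^2 = 1/(4*R) := by
        field_simp
      have h1 : Real.exp (-K) * (v R ^ p) / (4*R) ≤
          Real.exp (-K) * (v R ^ p * ((R-t)/R^2)) := by
        have h3 : (R/4)/R^2 ≤ (R-t)/R^2 := by gcongr
        calc Real.exp (-K) * (v R ^ p) / (4*R)
            = Real.exp (-K) * (v R ^ p * ((R/4)/R^2)) := by rw [h2]; ring
          _ ≤ Real.exp (-K) * (v R ^ p * ((R-t)/R^2)) := by
              apply mul_le_mul_of_nonneg_left _ (Real.exp_nonneg _)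
              exact mul_le_mul_of_nonneg_left h3 hc0.le
      linarith
    have hcmp := cmp_aux (x := R/2) (y := 3*R/4) (f := v)
      (g := fun t => -(Real.exp (-K) * (v R ^ p) / (4*R)) * t)
      (f' := fun t => -(w t))
      (g' := fun _ => -(Real.exp (-K) * (v R ^ p) / (4*R))) (by linarith)
      (fun t ht => hvd t (hsub h12 h34 ht))
      (fun t _ => by
        simpa using (hasDerivAt_id t).const_mul (-(Real.exp (-K) * (v R ^ p) / (4*R))))
      hptw
    have hvv : v R ≤ v (3*R/4) := hdec (3*R/4) h34 R hRmem (by linarith)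
    have hde : Real.exp (-K) * (v R ^ p) / (4*R) * (R/4) = Real.exp (-K)/16 * v R ^ p := by
      field_simp
      ring
    nlinarith [hcmp]
  -- L3 : iteration
  have hmem2 : ρ/2 ∈ Set.Ioo (0:ℝ) ρ := ⟨by linarith, by linarith⟩
  have hd0 : 0 < Real.exp (-K)/16 * v (ρ/2) ^ p := by
    have := hv (ρ/2) hmem2
    positivity
  have hL3 : ∀ n : ℕ, v (ρ/2) + n * (Real.exp (-K)/16 * v (ρ/2) ^ p) ≤ v (ρ/2 / 2^n) := by
    intro n
    induction n with
    | zero => simp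
    | succ n ih =>
      have h2n : (1:ℝ) ≤ 2^n := one_le_pow₀ (by norm_num)
      have hRn0 : (0:ℝ) < ρ/2/2^n := by positivity
      have hle : ρ/2/2^n ≤ ρ/2 := div_le_self (by linarith) h2n
      have hRnρ : ρ/2/2^n < ρ := by linarith
      have hstep := hL2 _ hRn0 hRnρ
      have hmem1 : ρ/2/2^n ∈ Set.Ioo (0:ℝ) ρ := ⟨hRn0, hRnρ⟩
      have hmono : v (ρ/2) ≤ v (ρ/2/2^n) := hdec _ hmem1 _ hmem2 hle
      have hpow : v (ρ/2) ^ p ≤ v (ρ/2/2^n) ^ p :=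
        Real.rpow_le_rpow (hv _ hmem2).le hmono hp0
      have heq : ρ/2/2^(n+1) = ρ/2/2^n/2 := by rw [pow_succ, ← div_div]
      rw [heq]
      have hmul : Real.exp (-K)/16 * v (ρ/2) ^ p ≤ Real.exp (-K)/16 * v (ρ/2/2^n) ^ p :=
        mul_le_mul_of_nonneg_left hpow (by positivity)
      push_cast
      linarith
  -- constants for step 2
  set m := (p-1)/2 with hmdef
  have hm0 : 0 < m := by rw [hmdef]; linarith
  set θ := 1 + Real.exp (-K)/256 with hθdef
  have hexpK := Real.exp_pos (-K)
  have hθ1 : 1 < θ := by rw [hθdef]; linarith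
  have hθ0 : 0 < θ := by linarith
  have hθp1 : 1 < θ ^ (p+1) :=
    (Real.one_lt_rpow_iff_of_pos hθ0).2 (Or.inl ⟨hθ1, by linarith⟩)
  have hθpp : 0 < θ ^ (p+1) := Real.rpow_pos_of_pos hθ0 _
  have hfrac1 : 1/θ^(p+1) < 1 := by rw [div_lt_one hθpp]; exact hθp1
  have hfrac0 : 0 < 1/θ^(p+1) := by positivity
  set S := 2*(1 - 1/θ^(p+1))/(p+1) with hSdef
  have hS0 : 0 < S := by
    rw [hSdef]; apply div_pos (by linarith) (by linarith)
  have hsqS : 0 < Real.sqrt S := Real.sqrt_pos.2 hS0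
  set τ := 3/8 * m * Real.exp (-K) * Real.sqrt S with hτdef
  have hτ0 : 0 < τ := by rw [hτdef]; positivity
  set Athr := 1 + (τ⁻¹) ^ (1/m) with hAdef
  have hthr0 : 0 ≤ (τ⁻¹) ^ (1/m) := Real.rpow_nonneg (inv_nonneg.2 hτ0.le) _
  have hA1 : 1 ≤ Athr := by rw [hAdef]; linarith
  -- choose R with v R large
  obtain ⟨n, hn⟩ := exists_nat_ge ((Athr - v (ρ/2)) / (Real.exp (-K)/16 * v (ρ/2) ^ p))
  set R := ρ/2/2^n with hRdef
  have h2n : (1:ℝ) ≤ 2^n := one_le_pow₀ (by norm_num)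
  have hR0 : 0 < R := by rw [hRdef]; positivity
  have hRρ2 : R ≤ ρ/2 := by rw [hRdef]; exact div_le_self (by linarith) h2n
  have hRρ : R < ρ := by linarith
  have hRmem : R ∈ Set.Ioo (0:ℝ) ρ := ⟨hR0, hRρ⟩
  have haA : Athr ≤ v R := by
    have h1 := hL3 n
    rw [← hRdef] at h1
    rw [div_le_iff₀ hd0] at hn
    have h2 : Athr ≤ v (ρ/2) + (n:ℝ) * (Real.exp (-K)/16 * v (ρ/2) ^ p) := by linarith
    exact le_trans h2 h1
  have ha1 : (1:ℝ) ≤ v R := le_trans hA1 haA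
  have ha0 : (0:ℝ) < v R := by linarith
  have h78mem : 7*R/8 ∈ Set.Ioo (0:ℝ) ρ := ⟨by linarith, by linarith⟩
  have h12mem : R/2 ∈ Set.Ioo (0:ℝ) ρ := ⟨by linarith, by linarith⟩
  have h1516mem : 15*R/16 ∈ Set.Ioo (0:ℝ) ρ := ⟨by linarith, by linarith⟩
  set b := 2*K/R with hbdef
  have hb0 : 0 < b := by rw [hbdef]; positivity
  have hIccsub : Set.Icc (R/2) R ⊆ Set.Ioo (0:ℝ) ρ := by
    intro t ht
    exact ⟨by linarith [ht.1], by linarith [ht.2]⟩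
  have hvRp0 : 0 < v R ^ p := Real.rpow_pos_of_pos ha0 p
  -- key pointwise bound on [R/2, R]
  have hkey : ∀ t ∈ Set.Icc (R/2) R, deriv w t - b * w t ≤ -(v t ^ p / R^2) := by
    intro t ht
    have htm : t ∈ Set.Ioo (0:ℝ) ρ := hIccsub ht
    have ht0 : 0 < t := htm.1
    have h1 := hw' t htm
    have h2 : K/t ≤ b := by
      rw [hbdef, div_le_div_iff₀ ht0 hR0]
      nlinarith [ht.1]
    have hvp : 0 < v t ^ p := Real.rpow_pos_of_pos (hv t htm) p
    have h3 : v t ^ p / R^2 ≤ v t ^ p / t^2 := by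
      rw [div_le_div_iff₀ (by positivity) (by positivity)]
      nlinarith [mul_le_mul_of_nonneg_left (by nlinarith [ht.2] : t^2 ≤ R^2) hvp.le]
    have hwt := (hw0 t htm).le
    nlinarith [mul_le_mul_of_nonneg_right h2 hwt]
  -- the integrating-factor function q
  set q : ℝ → ℝ := fun t => Real.exp (b*(R-t)) * w t with hqdef
  have hq0 : ∀ t ∈ Set.Icc (R/2) R, 0 ≤ q t := by
    intro t ht
    exact mul_nonneg (Real.exp_nonneg _) (hw0 t (hIccsub ht)).le
  have hqd : ∀ t ∈ Set.Icc (R/2) R, HasDerivAt q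
      (Real.exp (b*(R-t)) * (b * -1) * w t + Real.exp (b*(R-t)) * deriv w t) t := by
    intro t ht
    exact (((hasDerivAt_id t).const_sub R).const_mul b).exp.mul (hwd t (hIccsub ht))
  have hqw : ∀ t ∈ Set.Icc (R/2) R, w t ≤ q t := by
    intro t ht
    have hwt := (hw0 t (hIccsub ht)).le
    have hex1 : (1:ℝ) ≤ Real.exp (b*(R-t)) :=
      Real.one_le_exp (mul_nonneg hb0.le (by linarith [ht.2]))
    exact le_mul_of_one_le_left hwt hex1
  have hexpqw : ∀ t ∈ Set.Icc (R/2) R, Real.exp (-K) * q t ≤ w t := by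
    intro t ht
    have hbK : b * (R - t) ≤ K := by
      rw [hbdef, div_mul_eq_mul_div, div_le_iff₀ hR0]
      nlinarith [ht.1]
    have e1 : Real.exp (-(b*(R-t))) * (Real.exp (b*(R-t)) * w t) = w t := by
      rw [← mul_assoc, ← Real.exp_add]
      simp
    calc Real.exp (-K) * q t ≤ Real.exp (-(b*(R-t))) * q t :=
          mul_le_mul_of_nonneg_right (Real.exp_le_exp.2 (by linarith)) (hq0 t ht)
      _ = w t := by rw [hqdef]; exact e1
  -- energy inequality
  have hEn : ∀ r ∈ Set.Icc (R/2) R,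
      v r ^ (p+1) ≤ v R ^ (p+1) + (p+1)*R^2*(q r * q r/2) := by
    intro r hr
    have hrmem := hIccsub hr
    have hpe : p + 1 - 1 = p := by ring
    have hptw : ∀ t ∈ Set.Icc r R,
        ((p+1)*R^2) * ((Real.exp (b*(R-t)) * (b * -1) * w t
            + Real.exp (b*(R-t)) * deriv w t) * q t
          + q t * (Real.exp (b*(R-t)) * (b * -1) * w t
            + Real.exp (b*(R-t)) * deriv w t)) / 2
          ≤ -(w t) * (p+1) * v t ^ (p+1-1) := by
      intro t ht
      have ht' : t ∈ Set.Icc (R/2) R := ⟨le_trans hr.1 ht.1, ht.2⟩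
      have htm := hIccsub ht'
      have hkt := hkey t ht'
      have hwt := (hw0 t htm).le
      have hvp : 0 < v t ^ p := Real.rpow_pos_of_pos (hv t htm) p
      have hqt0 := hq0 t ht'
      have hD : Real.exp (b*(R-t)) * (b * -1) * w t + Real.exp (b*(R-t)) * deriv w t
          ≤ Real.exp (b*(R-t)) * (-(v t ^ p/R^2)) := by
        have e : Real.exp (b*(R-t)) * (b * -1) * w t + Real.exp (b*(R-t)) * deriv w t
            = Real.exp (b*(R-t)) * (deriv w t - b * w t) := by ring
        rw [e]
        exact mul_le_mul_of_nonneg_left hkt (Real.exp_nonneg _)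
      have hstep1 : (Real.exp (b*(R-t)) * (b * -1) * w t
          + Real.exp (b*(R-t)) * deriv w t) * q t
          ≤ Real.exp (b*(R-t)) * (-(v t ^ p/R^2)) * q t :=
        mul_le_mul_of_nonneg_right hD hqt0
      have hstep2 : Real.exp (b*(R-t)) * (-(v t ^ p/R^2)) * q t
          = -(v t ^ p/R^2) * (Real.exp (b*(R-t)) * q t) := by ring
      have hstep3 : w t ≤ Real.exp (b*(R-t)) * q t := by
        have hex1 : (1:ℝ) ≤ Real.exp (b*(R-t)) :=
          Real.one_le_exp (mul_nonneg hb0.le (by linarith [ht'.2]))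
        exact le_trans (hqw t ht') (le_mul_of_one_le_left hqt0 hex1)
      have hstep4 : -(v t ^ p/R^2) * (Real.exp (b*(R-t)) * q t) ≤ -(v t ^ p/R^2) * w t :=
        mul_le_mul_of_nonpos_left hstep3 (neg_nonpos.2 (div_nonneg hvp.le (sq_nonneg R)))
      have hDq : (Real.exp (b*(R-t)) * (b * -1) * w t + Real.exp (b*(R-t)) * deriv w t) * q t
          ≤ -(v t ^ p/R^2) * w t := le_trans hstep1 (hstep2 ▸ hstep4)
      have hC0 : (0:ℝ) ≤ (p+1)*R^2 := by positivity
      have e6 : ((p+1)*R^2) * ((Real.exp (b*(R-t)) * (b * -1) * w t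
            + Real.exp (b*(R-t)) * deriv w t) * q t
          + q t * (Real.exp (b*(R-t)) * (b * -1) * w t
            + Real.exp (b*(R-t)) * deriv w t)) / 2
          = ((p+1)*R^2) * ((Real.exp (b*(R-t)) * (b * -1) * w t
            + Real.exp (b*(R-t)) * deriv w t) * q t) := by ring
      have e7 : ((p+1)*R^2) * (-(v t ^ p/R^2) * w t) = -(w t) * (p+1) * v t ^ p := by
        field_simp
      rw [hpe, e6, ← e7]
      exact mul_le_mul_of_nonneg_left hDq hC0
    have hcmp := cmp_aux (x := r) (y := R)
      (f := fun t => ((p+1)*R^2) * (q t * q t / 2))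
      (g := fun t => v t ^ (p+1))
      (f' := fun t => ((p+1)*R^2) * ((Real.exp (b*(R-t)) * (b * -1) * w t
            + Real.exp (b*(R-t)) * deriv w t) * q t
          + q t * (Real.exp (b*(R-t)) * (b * -1) * w t
            + Real.exp (b*(R-t)) * deriv w t)) / 2)
      (g' := fun t => -(w t) * (p+1) * v t ^ (p+1-1))
      hr.2
      (fun t ht => ?_)
      (fun t ht => (hvd t (hIccsub ⟨le_trans hr.1 ht.1, ht.2⟩)).rpow_const
        (Or.inl (hv t (hIccsub ⟨le_trans hr.1 ht.1, ht.2⟩)).ne'))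
      hptw
    · have hqR0 : 0 ≤ q R * q R := mul_self_nonneg _
      have hC0 : (0:ℝ) ≤ (p+1)*R^2 := by positivity
      nlinarith [hcmp, mul_le_mul_of_nonneg_left hqR0 hC0]
    · have ht' : t ∈ Set.Icc (R/2) R := ⟨le_trans hr.1 ht.1, ht.2⟩
      have h1 := (hqd t ht').mul (hqd t ht')
      have h2 := (h1.div_const 2).const_mul ((p+1)*R^2)
      exact h2.congr_deriv (by ring)
  -- L5 : theta-growth
  have hL5 : θ * v R ≤ v (7*R/8) := by
    have hptw : ∀ t ∈ Set.Icc (7*R/8) (15*R/16),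
        -(w t) ≤ -(Real.exp (-K) * (v R ^ p) / (16*R)) := by
      intro t ht
      have hwl := hL1 R hR0 hRρ t (by linarith [ht.1]) (by linarith [ht.2])
      have h2 : (R/16)/R^2 = 1/(16*R) := by field_simp
      have h3 : (R/16)/R^2 ≤ (R-t)/R^2 := by gcongr; linarith [ht.2]
      have h1 : Real.exp (-K) * (v R ^ p) / (16*R) ≤
          Real.exp (-K) * (v R ^ p * ((R-t)/R^2)) := by
        calc Real.exp (-K) * (v R ^ p) / (16*R)
            = Real.exp (-K) * (v R ^ p * ((R/16)/R^2)) := by rw [h2]; ring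
          _ ≤ _ := by
              apply mul_le_mul_of_nonneg_left _ (Real.exp_nonneg _)
              exact mul_le_mul_of_nonneg_left h3 hvRp0.le
      linarith
    have hcmp := cmp_aux (x := 7*R/8) (y := 15*R/16) (f := v)
      (g := fun t => -(Real.exp (-K) * (v R ^ p) / (16*R)) * t)
      (f' := fun t => -(w t))
      (g' := fun _ => -(Real.exp (-K) * (v R ^ p) / (16*R))) (by linarith)
      (fun t ht => hvd t (hsub h78mem h1516mem ht))
      (fun t _ => by
        simpa using (hasDerivAt_id t).const_mul (-(Real.exp (-K) * (v R ^ p) / (16*R))))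
      hptw
    have hvv : v R ≤ v (15*R/16) := hdec (15*R/16) h1516mem R hRmem (by linarith)
    have hap : v R ≤ v R ^ p := by
      calc v R = v R ^ (1:ℝ) := (Real.rpow_one _).symm
        _ ≤ v R ^ p := Real.rpow_le_rpow_of_exponent_le ha1 hp.le
    have hde : -(Real.exp (-K) * (v R ^ p) / (16*R)) * (15*R/16) -
        -(Real.exp (-K) * (v R ^ p) / (16*R)) * (7*R/8)
        = -(Real.exp (-K) * (v R ^ p) / 256) := by
      field_simp; ring
    have hθa : θ * v R = v R + Real.exp (-K)/256 * v R := by rw [hθdef]; ring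
    nlinarith [hcmp, mul_le_mul_of_nonneg_left hap (le_of_lt hexpK)]
  -- L7 : first-order lower bound on w
  have hL7 : ∀ r ∈ Set.Icc (R/2) (7*R/8),
      Real.exp (-K) * (Real.sqrt S / R * v r ^ ((p+1)/2)) ≤ w r := by
    intro r hr
    have hr' : r ∈ Set.Icc (R/2) R := ⟨hr.1, by linarith [hr.2]⟩
    have hrmem := hIccsub hr'
    have hvr0 : 0 < v r := hv r hrmem
    have hθa : θ * v R ≤ v r :=
      le_trans hL5 (hdec r hrmem (7*R/8) h78mem hr.2)
    have hA : v R ≤ v r / θ := by rw [le_div_iff₀ hθ0]; linarith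
    have hA2 : v R ^ (p+1) ≤ v r ^ (p+1) / θ^(p+1) := by
      calc v R ^ (p+1) ≤ (v r / θ)^(p+1) := Real.rpow_le_rpow ha0.le hA (by linarith)
        _ = v r ^ (p+1) / θ^(p+1) := Real.div_rpow hvr0.le hθ0.le _
    have hEr := hEn r hr'
    have h1 : (1 - 1/θ^(p+1)) * v r ^ (p+1) ≤ (p+1)*R^2*(q r * q r/2) := by
      have e : v r ^(p+1)/θ^(p+1) = (1/θ^(p+1)) * v r ^(p+1) := by ring
      rw [e] at hA2
      linarith
    have hSsq : Real.sqrt S * Real.sqrt S = S := Real.mul_self_sqrt hS0.le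
    have hvv : v r ^ ((p+1)/2) * v r ^ ((p+1)/2) = v r ^ (p+1) := by
      rw [← Real.rpow_add hvr0]
      have e2 : (p+1)/2+(p+1)/2 = p+1 := by ring
      rw [e2]
    have hz0 : 0 ≤ Real.sqrt S / R * v r ^ ((p+1)/2) := by
      have h5 := Real.rpow_nonneg hvr0.le ((p+1)/2)
      positivity
    have hz2 : (Real.sqrt S / R * v r ^ ((p+1)/2)) * (Real.sqrt S / R * v r ^ ((p+1)/2))
        ≤ q r * q r := by
      have e : (Real.sqrt S / R * v r ^ ((p+1)/2)) * (Real.sqrt S / R * v r ^ ((p+1)/2))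
          = (Real.sqrt S * Real.sqrt S) * (v r ^ ((p+1)/2) * v r ^ ((p+1)/2))/(R^2) := by
        ring
      rw [e, hSsq, hvv, hSdef]
      rw [div_mul_eq_mul_div, div_div, div_le_iff₀ (by positivity)]
      linarith [h1]
    have hq0r := hq0 r hr'
    have hzq : Real.sqrt S / R * v r ^ ((p+1)/2) ≤ q r := by
      rcases le_or_gt (Real.sqrt S / R * v r ^ ((p+1)/2)) (q r) with h | h
      · exact h
      · exfalso
        have h6 : q r * q r < (Real.sqrt S / R * v r ^ ((p+1)/2))
            * (Real.sqrt S / R * v r ^ ((p+1)/2)) := mul_lt_mul'' h h hq0r hq0r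
        linarith [hz2]
    calc Real.exp (-K) * (Real.sqrt S / R * v r ^ ((p+1)/2))
        ≤ Real.exp (-K) * q r := mul_le_mul_of_nonneg_left hzq (Real.exp_nonneg _)
      _ ≤ w r := hexpqw r hr'
  -- final separable comparison on [R/2, 7R/8]
  have hgd : ∀ t ∈ Set.Icc (R/2) (7*R/8), HasDerivAt (fun t => v t ^ (-m))
      (-(w t) * (-m) * v t ^ (-m-1)) t := by
    intro t ht
    have htm := hIccsub ⟨ht.1, by linarith [ht.2]⟩
    exact (hvd t htm).rpow_const (Or.inl (hv t htm).ne')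
  have hptw8 : ∀ t ∈ Set.Icc (R/2) (7*R/8),
      m * (Real.exp (-K) * (Real.sqrt S / R)) ≤ -(w t) * (-m) * v t ^ (-m-1) := by
    intro t ht
    have htm := hIccsub ⟨ht.1, by linarith [ht.2]⟩
    have hvt := hv t htm
    have h7 := hL7 t ht
    have hcoef : 0 ≤ m * v t ^ (-m-1) := mul_nonneg hm0.le (Real.rpow_nonneg hvt.le _)
    have hmul := mul_le_mul_of_nonneg_left h7 hcoef
    have e5 : v t ^ (-m-1) * v t ^ ((p+1)/2) = 1 := by
      rw [← Real.rpow_add hvt]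
      have e : -m-1+(p+1)/2 = 0 := by rw [hmdef]; ring
      rw [e, Real.rpow_zero]
    have e4 : m * v t ^ (-m-1) * (Real.exp (-K) * (Real.sqrt S / R * v t ^ ((p+1)/2)))
        = m * (Real.exp (-K) * (Real.sqrt S / R)) * (v t ^ (-m-1) * v t ^ ((p+1)/2)) := by
      ring
    have e6 : -(w t) * (-m) * v t ^ (-m-1) = m * v t ^ (-m-1) * w t := by ring
    rw [e6]
    calc m * (Real.exp (-K) * (Real.sqrt S / R))
        = m * v t ^ (-m-1) * (Real.exp (-K) * (Real.sqrt S / R * v t ^ ((p+1)/2))) := by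
          rw [e4, e5, mul_one]
      _ ≤ m * v t ^ (-m-1) * w t := hmul
  have hcmp8 := cmp_aux (x := R/2) (y := 7*R/8)
    (f := fun t => m * (Real.exp (-K) * (Real.sqrt S / R)) * t)
    (g := fun t => v t ^ (-m))
    (f' := fun _ => m * (Real.exp (-K) * (Real.sqrt S / R)))
    (g' := fun t => -(w t) * (-m) * v t ^ (-m-1))
    (by linarith)
    (fun t _ => by
      simpa using (hasDerivAt_id t).const_mul (m * (Real.exp (-K) * (Real.sqrt S / R))))
    hgd hptw8
  have e7 : m * (Real.exp (-K) * (Real.sqrt S / R)) * (7*R/8)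
      - m * (Real.exp (-K) * (Real.sqrt S / R)) * (R/2) = τ := by
    rw [hτdef]; field_simp; ring
  have h12pos : 0 < v (R/2) ^ (-m) := Real.rpow_pos_of_pos (hv _ h12mem) _
  have hτlt : τ < v (7*R/8) ^ (-m) := by linarith [hcmp8, h12pos, e7]
  have h78ge : v R ≤ v (7*R/8) := hdec (7*R/8) h78mem R hRmem (by linarith)
  have hmono78 : v (7*R/8) ^ (-m) ≤ v R ^ (-m) := by
    rw [Real.rpow_neg (hv _ h78mem).le, Real.rpow_neg ha0.le]
    exact inv_anti₀ (Real.rpow_pos_of_pos ha0 m) (Real.rpow_le_rpow ha0.le h78ge hm0.le)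
  have hlast : v R ^ (-m) < τ := by
    have h1 : (τ⁻¹)^(1/m) < v R := by
      rw [hAdef] at haA; linarith
    have h3 := Real.rpow_lt_rpow (Real.rpow_nonneg (inv_nonneg.2 hτ0.le) _) h1 hm0
    rw [← Real.rpow_mul (inv_nonneg.2 hτ0.le), one_div_mul_cancel hm0.ne', Real.rpow_one] at h3
    rw [Real.rpow_neg ha0.le]
    have h4 := inv_strictAnti₀ (inv_pos.2 hτ0) h3
    rwa [inv_inv] at h4
  linarith

set_option maxHeartbeats 1000000 in
/-- (ODE Lemma, case `μ < 1/4`.) Let `μ < 1/4`, `p > 1`,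
`s ≥ β₋(p-1)+2`, `ε ∈ (0, min{1, √(1-4μ)})`, `H̄ ∈ ℝ` and `η(r) = r^{β₋}(1+r^ε)`.
Then there is `ρ̄ > 0` such that for every `ρ ∈ (0, ρ̄)` there is no positive decreasing
`C²` solution `v` on `(0, ρ]` with `v(ρ) = 0`, `v'(ρ) < 0` of
`-v'' - (2η'/η - H̄)v' + (η^{p-1}/r^s)v^p = 0` on `(0, ρ)`. -/
theorem stmt14 (μ p s ε Hbar : ℝ) (hμ : μ < 1 / 4) (hp : 1 < p)
    (hs : (1 / 2 - Real.sqrt (1 / 4 - μ)) * (p - 1) + 2 ≤ s)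
    (hε0 : 0 < ε) (hε1 : ε < min 1 (Real.sqrt (1 - 4 * μ))) :
    ∃ ρbar, 0 < ρbar ∧ ∀ ρ, 0 < ρ → ρ < ρbar →
      ¬ ∃ v : ℝ → ℝ, ContDiffOn ℝ 2 v (Set.Ioc 0 ρ) ∧
          (∀ r ∈ Set.Ioo 0 ρ, 0 < v r) ∧ (∀ r ∈ Set.Ioo 0 ρ, deriv v r < 0) ∧
          v ρ = 0 ∧ deriv v ρ < 0 ∧
          ∀ r ∈ Set.Ioo 0 ρ,
            -(deriv (deriv v) r) -
                (2 * deriv (fun t : ℝ =>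
                    t ^ (1 / 2 - Real.sqrt (1 / 4 - μ)) * (1 + t ^ ε)) r /
                  (r ^ (1 / 2 - Real.sqrt (1 / 4 - μ)) * (1 + r ^ ε)) - Hbar) *
                deriv v r
              + ((r ^ (1 / 2 - Real.sqrt (1 / 4 - μ)) * (1 + r ^ ε)) ^ (p - 1) / r ^ s) *
                v r ^ p = 0 := by
  set β := 1 / 2 - Real.sqrt (1 / 4 - μ) with hβdef
  have hε1' : ε < 1 := lt_of_lt_of_le hε1 (min_le_left _ _)
  refine ⟨1, one_pos, ?_⟩
  intro ρ hρ0 hρ1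
  rintro ⟨v, hC2, hpos, hder, hvρ, hdρ, hode⟩
  set K := 2*|β| + 2 + |Hbar| with hKdef
  have hK2 : 2 ≤ K := by
    rw [hKdef]; linarith [abs_nonneg β, abs_nonneg Hbar]
  set w : ℝ → ℝ := fun t => -deriv v t with hwdef
  have hC2' : ContDiffOn ℝ 2 v (Set.Ioo 0 ρ) := hC2.mono Set.Ioo_subset_Ioc_self
  have hd1 : ContDiffOn ℝ 1 (deriv v) (Set.Ioo 0 ρ) :=
    hC2'.deriv_of_isOpen isOpen_Ioo (by norm_num)
  have hmemIoo : ∀ r ∈ Set.Ioo (0:ℝ) ρ, Set.Ioo (0:ℝ) ρ ∈ nhds r :=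
    fun r hr => isOpen_Ioo.mem_nhds hr
  have hvdiff : ∀ r ∈ Set.Ioo (0:ℝ) ρ, HasDerivAt v (-(w r)) r := by
    intro r hr
    have h1 : DifferentiableAt ℝ v r :=
      (hC2'.differentiableOn (by norm_num)).differentiableAt (hmemIoo r hr)
    have h2 := h1.hasDerivAt
    rw [hwdef]
    simpa using h2
  have hw0 : ∀ r ∈ Set.Ioo (0:ℝ) ρ, 0 < w r := by
    intro r hr
    rw [hwdef]
    simp only [neg_pos]
    exact hder r hr
  have hwd : ∀ r ∈ Set.Ioo (0:ℝ) ρ, HasDerivAt w (-(deriv (deriv v) r)) r := by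
    intro r hr
    have h1 : DifferentiableAt ℝ (deriv v) r :=
      (hd1.differentiableOn (by norm_num)).differentiableAt (hmemIoo r hr)
    exact h1.hasDerivAt.neg
  have hwd' : ∀ r ∈ Set.Ioo (0:ℝ) ρ, HasDerivAt w (deriv w r) r :=
    fun r hr => (hwd r hr).differentiableAt.hasDerivAt
  -- derivative of η
  have hη : ∀ r : ℝ, 0 < r → deriv (fun t : ℝ => t ^ β * (1 + t ^ ε)) r
      = β * r ^ (β-1) * (1 + r ^ ε) + r ^ β * (ε * r ^ (ε-1)) := by
    intro r hr
    have h1 : HasDerivAt (fun t : ℝ => t ^ β) (β * r ^ (β-1)) r :=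
      Real.hasDerivAt_rpow_const (Or.inl hr.ne')
    have h2 : HasDerivAt (fun t : ℝ => 1 + t ^ ε) (ε * r ^ (ε-1)) r := by
      simpa using (Real.hasDerivAt_rpow_const (p := ε) (Or.inl hr.ne')).const_add 1
    exact (h1.mul h2).deriv
  -- bound on the drift coefficient
  have hA : ∀ r ∈ Set.Ioo (0:ℝ) ρ,
      |2 * deriv (fun t : ℝ => t ^ β * (1 + t ^ ε)) r / (r ^ β * (1 + r ^ ε)) - Hbar|
        ≤ K / r := by
    intro r hr
    have hr0 : 0 < r := hr.1
    have hr1 : r < 1 := lt_trans hr.2 hρ1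
    have hP : 0 < r ^ β := Real.rpow_pos_of_pos hr0 β
    have hE0 : 0 < r ^ ε := Real.rpow_pos_of_pos hr0 ε
    have hE1 : r ^ ε ≤ 1 := Real.rpow_le_one hr0.le hr1.le hε0.le
    rw [hη r hr0]
    have hPr : r ^ (β-1) = r ^ β / r := by rw [Real.rpow_sub hr0, Real.rpow_one]
    have hEr : r ^ (ε-1) = r ^ ε / r := by rw [Real.rpow_sub hr0, Real.rpow_one]
    rw [hPr, hEr]
    have heq : 2 * (β * (r ^ β / r) * (1 + r ^ ε) + r ^ β * (ε * (r ^ ε / r)))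
          / (r ^ β * (1 + r ^ ε)) - Hbar
        = (2*β*(1+r^ε) + 2*ε*r^ε - Hbar*(r*(1+r^ε))) / (r*(1+r^ε)) := by
      field_simp
    rw [heq]
    have h1E : (0:ℝ) < 1 + r^ε := by linarith
    have habs : |2*β*(1+r^ε) + 2*ε*r^ε - Hbar*(r*(1+r^ε))|
        ≤ 2*|β| * (1+r^ε) + 2*ε*r^ε + |Hbar| * (r*(1+r^ε)) := by
      rw [abs_le]
      constructor <;>
        nlinarith [le_abs_self β, neg_abs_le β, le_abs_self Hbar, neg_abs_le Hbar,
          mul_nonneg (by linarith [le_abs_self β] : (0:ℝ) ≤ |β| - β) h1E.le,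
          mul_nonneg (by linarith [neg_abs_le β] : (0:ℝ) ≤ |β| + β) h1E.le,
          mul_nonneg (mul_nonneg (by linarith [le_abs_self Hbar] : (0:ℝ) ≤ |Hbar| - Hbar) hr0.le) h1E.le,
          mul_nonneg (mul_nonneg (by linarith [neg_abs_le Hbar] : (0:ℝ) ≤ |Hbar| + Hbar) hr0.le) h1E.le]
    have hKE : 2*|β| * (1+r^ε) + 2*ε*r^ε + |Hbar| * (r*(1+r^ε)) ≤ K * (1+r^ε) := by
      rw [hKdef]
      nlinarith [mul_nonneg (mul_nonneg (by linarith : (0:ℝ) ≤ 1 - r) (abs_nonneg Hbar)) h1E.le,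
        mul_nonneg (by linarith : (0:ℝ) ≤ 1 - ε) hE0.le]
    calc |(2*β*(1+r^ε) + 2*ε*r^ε - Hbar*(r*(1+r^ε))) / (r*(1+r^ε))|
        = |2*β*(1+r^ε) + 2*ε*r^ε - Hbar*(r*(1+r^ε))| / (r*(1+r^ε)) := by
          rw [abs_div, abs_of_pos (by positivity : (0:ℝ) < r*(1+r^ε))]
      _ ≤ (K * (1+r^ε)) / (r*(1+r^ε)) := by
          gcongr
          linarith
      _ = K / r := by
          rw [div_eq_div_iff (by positivity) hr0.ne']
          ring
  -- lower bound on the potential coefficient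
  have hB : ∀ r ∈ Set.Ioo (0:ℝ) ρ,
      1/r^2 ≤ (r ^ β * (1 + r ^ ε)) ^ (p-1) / r ^ s := by
    intro r hr
    have hr0 : 0 < r := hr.1
    have hr1 : r ≤ 1 := le_of_lt (lt_trans hr.2 hρ1)
    have hE0 : 0 < r ^ ε := Real.rpow_pos_of_pos hr0 ε
    have hP : 0 < r ^ β := Real.rpow_pos_of_pos hr0 β
    have hrs : 0 < r ^ s := Real.rpow_pos_of_pos hr0 s
    have h1 : (r ^ β) ^ (p-1) ≤ (r ^ β * (1 + r ^ ε)) ^ (p-1) :=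
      Real.rpow_le_rpow hP.le (le_mul_of_one_le_right hP.le (by linarith)) (by linarith)
    have h2 : (r ^ β) ^ (p-1) = r ^ (β*(p-1)) := by
      rw [← Real.rpow_mul hr0.le]
    have h3 : r ^ (β*(p-1)) / r ^ s = r ^ (β*(p-1) - s) := (Real.rpow_sub hr0 _ _).symm
    have h4 : r ^ (-2:ℝ) ≤ r ^ (β*(p-1) - s) :=
      Real.rpow_le_rpow_of_exponent_ge hr0 hr1 (by linarith)
    have h5 : r ^ (-2:ℝ) = 1/r^2 := by
      rw [show (-2:ℝ) = -((2:ℕ):ℝ) by norm_num, Real.rpow_neg hr0.le,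
        Real.rpow_natCast, one_div]
    calc 1/r^2 = r ^ (-2:ℝ) := h5.symm
      _ ≤ r ^ (β*(p-1) - s) := h4
      _ = r ^ (β*(p-1)) / r ^ s := h3.symm
      _ = (r ^ β) ^ (p-1) / r ^ s := by rw [h2]
      _ ≤ (r ^ β * (1 + r ^ ε)) ^ (p-1) / r ^ s := by gcongr
  -- the differential inequality for w
  have hw'bound : ∀ r ∈ Set.Ioo (0:ℝ) ρ, deriv w r ≤ K / r * w r - v r ^ p / r ^ 2 := by
    intro r hr
    have hdw : deriv w r = -(deriv (deriv v) r) := (hwd r hr).deriv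
    have heq := hode r hr
    have hAb := hA r hr
    have hBb := hB r hr
    have hwr : 0 < w r := hw0 r hr
    have habs : |deriv v r| = w r := by
      rw [hwdef]
      exact abs_of_neg (hder r hr)
    have h1 : (2 * deriv (fun t : ℝ => t ^ β * (1 + t ^ ε)) r / (r ^ β * (1 + r ^ ε)) - Hbar)
        * deriv v r ≤ K / r * w r := by
      calc (2 * deriv (fun t : ℝ => t ^ β * (1 + t ^ ε)) r / (r ^ β * (1 + r ^ ε)) - Hbar)
            * deriv v r
          ≤ |(2 * deriv (fun t : ℝ => t ^ β * (1 + t ^ ε)) r / (r ^ β * (1 + r ^ ε)) - Hbar)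
            * deriv v r| := le_abs_self _
        _ = |2 * deriv (fun t : ℝ => t ^ β * (1 + t ^ ε)) r / (r ^ β * (1 + r ^ ε)) - Hbar|
            * |deriv v r| := abs_mul _ _
        _ = |2 * deriv (fun t : ℝ => t ^ β * (1 + t ^ ε)) r / (r ^ β * (1 + r ^ ε)) - Hbar|
            * w r := by rw [habs]
        _ ≤ K / r * w r := mul_le_mul_of_nonneg_right hAb hwr.le
    have hvp0 : 0 ≤ v r ^ p := (Real.rpow_pos_of_pos (hpos r hr) p).le
    have h2 : v r ^ p / r^2 ≤ (r ^ β * (1 + r ^ ε)) ^ (p-1) / r ^ s * v r ^ p := by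
      have h3 := mul_le_mul_of_nonneg_right hBb hvp0
      calc v r ^ p / r ^ 2 = 1/r^2 * v r ^ p := by ring
        _ ≤ _ := h3
    rw [hdw]
    linarith
  exact ode_blowup K p ρ hK2 hp hρ0 v w hpos hvdiff hw0 hwd' hw'bound
end
end
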